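/- arXiv:2303.05783 — 3 statements merged into one kernel-verified Lean document; each statement's English description precedes it below -/
import Mathlib

section
/- Let A be the unique solution on [0,T) of −Ȧ_t = −A_t²/η_t + λ_t with lim_{t↗T} A_t = ∞. Then the map t ↦ A_t·exp(−∫_0^t A_r/η_r dr) is non-increasing on [0,T), and its limit α⁰_T := lim_{t↗T} A_t·exp(−∫_0^t A_r/η_r dr) exists and lies in (0,∞). -/
open MeasureTheory intervalIntegral Set Filter Topology

noncomputable section

structure Coeffs (T : ℝ) where
  lam : ℝ → ℝ
  kap : ℝ → ℝ
  kap' : ℝ → ℝ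
  eta : ℝ → ℝ
  eta' : ℝ → ℝ
  lam_meas : Measurable lam
  lam_bdd : ∃ M, ∀ t ∈ Set.Icc (0:ℝ) T, |lam t| ≤ M
  lam_nonneg : ∀ t ∈ Set.Icc (0:ℝ) T, 0 ≤ lam t
  kap_hasDeriv : ∀ t ∈ Set.Icc (0:ℝ) T, HasDerivWithinAt kap (kap' t) (Set.Icc (0:ℝ) T) t
  kap'_cont : ContinuousOn kap' (Set.Icc (0:ℝ) T)
  kap_nonneg : ∀ t ∈ Set.Icc (0:ℝ) T, 0 ≤ kap t
  eta_hasDeriv : ∀ t ∈ Set.Icc (0:ℝ) T, HasDerivWithinAt eta (eta' t) (Set.Icc (0:ℝ) T) t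
  eta'_cont : ContinuousOn eta' (Set.Icc (0:ℝ) T)
  eta_pos : ∀ t ∈ Set.Icc (0:ℝ) T, 0 < eta t

/-- `A` solves the Riccati terminal value problem
`-Ȧ_t = -A_t^2/η_t + δ·(κ_t/η_t)·A_t + λ_t` on `[0,T)` (in integral form, which encodes
absolute continuity with the stated derivative a.e.) with singular terminal condition
`lim_{t↗T} A_t = ∞`. -/
def IsRiccatiSol (T δ : ℝ) (C : Coeffs T) (A : ℝ → ℝ) : Prop :=
  ContinuousOn A (Set.Ico 0 T) ∧
  (∀ s ∈ Set.Ico (0:ℝ) T, ∀ t ∈ Set.Ico (0:ℝ) T,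
    A t = A s + ∫ r in s..t, (A r ^ 2 / C.eta r - δ * (C.kap r / C.eta r) * A r - C.lam r)) ∧
  Filter.Tendsto A (nhdsWithin T (Set.Iio T)) Filter.atTop

/-- The function `h^δ`. -/
def hFun (T δ : ℝ) (C : Coeffs T) (A : ℝ → ℝ) (t : ℝ) : ℝ :=
  Real.exp (-∫ r in (0:ℝ)..t, A r / C.eta r) *
    ∫ s in (0:ℝ)..t, (1 / C.eta s) * Real.exp (∫ r in (0:ℝ)..s, (2 * A r - δ * C.kap r) / C.eta r)

/-- `f_μ(t) = ∫_0^t κ_u μ_u h^δ_u du`. -/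
def fMu (T δ : ℝ) (C : Coeffs T) (A μ : ℝ → ℝ) (t : ℝ) : ℝ :=
  ∫ u in (0:ℝ)..t, C.kap u * μ u * hFun T δ C A u

/-- Running maximum `f̄_μ(t) = max_{0 ≤ s ≤ t} f_μ(s)`. -/
def fBar (T δ : ℝ) (C : Coeffs T) (A μ : ℝ → ℝ) (t : ℝ) : ℝ :=
  sSup (fMu T δ C A μ '' Set.Icc 0 t)

/-- Running minimum `f̲_μ(t) = min_{0 ≤ s ≤ t} f_μ(s)`. -/
def fUnd (T δ : ℝ) (C : Coeffs T) (A μ : ℝ → ℝ) (t : ℝ) : ℝ :=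
  sInf (fMu T δ C A μ '' Set.Icc 0 t)

/-- The candidate liquidation time `τ_μ(x)`, with the convention `inf ∅ = T`. -/
def tauMu (T δ : ℝ) (C : Coeffs T) (A μ : ℝ → ℝ) (x : ℝ) : ℝ :=
  sInf (insert T {t ∈ Set.Icc (0:ℝ) T |
    fMu T δ C A μ t = max (min x (fBar T δ C A μ T)) (fUnd T δ C A μ T)})

/-- `(X, Y)` is a (continuous) solution of the forward-backward system
`Ẋ_t = -((Y_t - δκ_t X_t)/η_t)·1_{t ≤ τ}`, `-Ẏ_t = (λ_t X_t + κ_t μ_t)·1_{t ≤ τ}` for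
a.e. `t ∈ [0,T]` (in integral form), with `X_0 = x` and `X_T = 0`. -/
def IsFBSol (T δ : ℝ) (C : Coeffs T) (μ : ℝ → ℝ) (x τ : ℝ) (X Y : ℝ → ℝ) : Prop :=
  ContinuousOn X (Set.Icc 0 T) ∧ ContinuousOn Y (Set.Icc 0 T) ∧
  X 0 = x ∧ X T = 0 ∧
  (∀ t ∈ Set.Icc (0:ℝ) T,
    X t = x - ∫ s in (0:ℝ)..t,
      ((Y s - δ * C.kap s * X s) / C.eta s) * Set.indicator (Set.Iic τ) (fun _ => (1:ℝ)) s) ∧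
  (∀ t ∈ Set.Icc (0:ℝ) T,
    Y t = Y T + ∫ s in t..T,
      (C.lam s * X s + C.kap s * μ s) * Set.indicator (Set.Iic τ) (fun _ => (1:ℝ)) s)

/-- The candidate strategy `ξ = (Y - δκX)/η`. -/
def xiC (T δ : ℝ) (C : Coeffs T) (X Y : ℝ → ℝ) (t : ℝ) : ℝ :=
  (Y t - δ * C.kap t * X t) / C.eta t

/-- The admissible set `𝒜_x`: square-integrable strategies whose portfolio process is
absorbed at zero and satisfies the liquidation constraint. -/
def Admissible (T x : ℝ) (ξ : ℝ → ℝ) : Prop :=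
  MeasureTheory.MemLp ξ 2 (MeasureTheory.volume.restrict (Set.Icc 0 T)) ∧
  ∃ τ ∈ Set.Ioc (0:ℝ) T,
    (∀ t ∈ Set.Ico (0:ℝ) τ, x - ∫ s in (0:ℝ)..t, ξ s ≠ 0) ∧
    (∀ t ∈ Set.Icc τ T, x - ∫ s in (0:ℝ)..t, ξ s = 0)

/-- The cost functional `J(ξ; μ)` of the representative player with initial position `x`. -/
def Jcost (T : ℝ) (C : Coeffs T) (μ ξ : ℝ → ℝ) (x : ℝ) : ℝ :=
  ∫ t in (0:ℝ)..T, ((1/2) * C.eta t * ξ t ^ 2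
    + C.kap t * μ t * (x - ∫ s in (0:ℝ)..t, ξ s)
    + (1/2) * C.lam t * (x - ∫ s in (0:ℝ)..t, ξ s) ^ 2)

/-- Right tail distribution function `q₀(x) = ν([x,∞))`. -/
def q0 (ν : Measure ℝ) (x : ℝ) : ℝ := (ν (Set.Ici x)).toReal

/-- Left tail distribution function `p₀(x) = ν((-∞,x])`. -/
def p0 (ν : Measure ℝ) (x : ℝ) : ℝ := (ν (Set.Iic x)).toReal

/-- Supremum norm on `[0,T]`. -/
def supNorm (T : ℝ) (f : ℝ → ℝ) : ℝ := sSup ((fun t => |f t|) '' Set.Icc 0 T)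

/-- Essential supremum norm on `[0,T]`. -/
def essSupNorm (T : ℝ) (f : ℝ → ℝ) : ℝ :=
  (MeasureTheory.eLpNorm f ⊤ (MeasureTheory.volume.restrict (Set.Icc 0 T))).toReal

namespace Stmt1Aux


variable {T : ℝ} {C : Coeffs T} {A : ℝ → ℝ}

/-- The exponential integrating factor. -/
def eeF {T : ℝ} (C : Coeffs T) (A : ℝ → ℝ) (t : ℝ) : ℝ :=
  Real.exp (-∫ r in (0:ℝ)..t, A r / C.eta r)

lemma eta_cont (C : Coeffs T) : ContinuousOn C.eta (Set.Icc 0 T) :=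
  fun x hx => (C.eta_hasDeriv x hx).continuousWithinAt

lemma contB (hAc : ContinuousOn A (Set.Ico 0 T)) :
    ContinuousOn (fun r => A r / C.eta r) (Set.Ico 0 T) :=
  hAc.div ((eta_cont C).mono Set.Ico_subset_Icc_self)
    (fun x hx => (C.eta_pos x (Set.Ico_subset_Icc_self hx)).ne')

lemma intIntB (hAc : ContinuousOn A (Set.Ico 0 T)) {a b : ℝ} (h0 : 0 ≤ a) (hab : a ≤ b)
    (hbT : b < T) : IntervalIntegrable (fun r => A r / C.eta r) volume a b := by
  apply ContinuousOn.intervalIntegrable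
  rw [Set.uIcc_of_le hab]
  exact (contB hAc).mono (fun x hx => ⟨le_trans h0 hx.1, lt_of_le_of_lt hx.2 hbT⟩)

lemma cont_ee (hAc : ContinuousOn A (Set.Ico 0 T)) (hT : 0 < T) :
    ContinuousOn (eeF C A) (Set.Ico 0 T) := by
  intro x hx
  set c := (x + T) / 2 with hc
  have hxc : x < c := by simp only [hc]; linarith [hx.2]
  have hcT : c < T := by simp only [hc]; linarith [hx.2]
  have hc0 : (0:ℝ) ≤ c := by linarith [hx.1]
  have hI : ContinuousOn (fun y => ∫ r in (0:ℝ)..y, A r / C.eta r) (Set.Icc 0 c) := by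
    have := intervalIntegral.continuousOn_primitive_interval
      (f := fun r => A r / C.eta r) (μ := volume) (a := 0) (b := c) ?_
    · rwa [Set.uIcc_of_le hc0] at this
    · rw [Set.uIcc_of_le hc0]
      exact ((contB hAc).mono (fun y hy => ⟨hy.1, lt_of_le_of_lt hy.2 hcT⟩)).integrableOn_compact
        isCompact_Icc
  have hE : ContinuousOn (eeF C A) (Set.Icc 0 c) :=
    Real.continuous_exp.comp_continuousOn hI.neg
  exact (hE.continuousWithinAt ⟨hx.1, hxc.le⟩).mono_of_mem_nhdsWithin
    (mem_nhdsWithin.2 ⟨Set.Iio c, isOpen_Iio, hxc, fun y hy => ⟨hy.2.1, (hy.1 : y < c).le⟩⟩)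

lemma hasDerivAt_ee (hAc : ContinuousOn A (Set.Ico 0 T)) {u : ℝ} (hu : u ∈ Set.Ioo 0 T) :
    HasDerivAt (eeF C A) (-(A u / C.eta u) * eeF C A u) u := by
  have hBo : ContinuousOn (fun r => A r / C.eta r) (Set.Ioo 0 T) :=
    (contB hAc).mono Set.Ioo_subset_Ico_self
  have hI : HasDerivAt (fun y => ∫ r in (0:ℝ)..y, A r / C.eta r) (A u / C.eta u) u := by
    apply intervalIntegral.integral_hasDerivAt_right
    · exact intIntB hAc le_rfl hu.1.le hu.2
    · exact hBo.stronglyMeasurableAtFilter isOpen_Ioo u hu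
    · exact hBo.continuousAt (Ioo_mem_nhds hu.1 hu.2)
  have := hI.neg.exp
  convert this using 1
  · rfl
  · simp only [eeF, Pi.neg_apply]; ring



lemma intInt_of_bdd {g : ℝ → ℝ} {a b K : ℝ} (hab : a ≤ b)
    (hm : AEStronglyMeasurable g (volume.restrict (Set.Ioc a b)))
    (hb : ∀ x ∈ Set.Ioc a b, |g x| ≤ K) : IntervalIntegrable g volume a b := by
  rw [intervalIntegrable_iff_integrableOn_Ioc_of_le hab]
  refine Integrable.mono' (integrable_const K) hm ?_
  filter_upwards [ae_restrict_mem measurableSet_Ioc] with x hx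
  simpa using hb x hx

/-- FTC2 helper: integral of a right-derivative. -/
lemma ftc2 {f f' : ℝ → ℝ} {a b : ℝ} (hab : a ≤ b)
    (hcont : ContinuousOn f (Set.Icc a b))
    (hderiv : ∀ x ∈ Set.Ioo a b, HasDerivAt f (f' x) x)
    (hint : IntervalIntegrable f' volume a b) :
    ∫ u in a..b, f' u = f b - f a :=
  intervalIntegral.integral_eq_sub_of_hasDeriv_right_of_le hab hcont
    (fun x hx => (hderiv x hx).hasDerivWithinAt) hint

/-- Fubini on a triangle. -/
lemma swap_tri {f g : ℝ → ℝ} {s t Kf Kg : ℝ} (hst : s ≤ t)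
    (hfm : AEStronglyMeasurable f (volume.restrict (Set.Ioc s t)))
    (hgm : AEStronglyMeasurable g (volume.restrict (Set.Ioc s t)))
    (hfb : ∀ x ∈ Set.Ioc s t, |f x| ≤ Kf) (hgb : ∀ x ∈ Set.Ioc s t, |g x| ≤ Kg) :
    ∫ r in s..t, f r * (∫ u in r..t, g u) = ∫ u in s..t, (∫ r in s..u, f r) * g u := by
  set ν := volume.restrict (Set.Ioc s t) with hν
  have hfin : IsFiniteMeasure ν :=
    ⟨by rw [hν, Measure.restrict_apply_univ]; exact measure_Ioc_lt_top⟩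
  set S : Set (ℝ × ℝ) := {q : ℝ × ℝ | q.1 < q.2} with hS
  have hSmeas : MeasurableSet S := measurableSet_lt measurable_fst measurable_snd
  set H : ℝ → ℝ → ℝ := fun r u => f r * g u * S.indicator 1 (r, u) with hH
  have hHm : AEStronglyMeasurable (Function.uncurry H) (ν.prod ν) := by
    have h1 : AEStronglyMeasurable (fun p : ℝ × ℝ => f p.1) (ν.prod ν) := hfm.comp_fst
    have h2 : AEStronglyMeasurable (fun p : ℝ × ℝ => g p.2) (ν.prod ν) := hgm.comp_snd
    have h3 : AEStronglyMeasurable (fun p : ℝ × ℝ => S.indicator (1 : ℝ × ℝ → ℝ) p)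
        (ν.prod ν) := ((measurable_const.indicator hSmeas).aestronglyMeasurable)
    have := (h1.mul h2).mul h3
    apply this.congr
    filter_upwards with p
    simp [Function.uncurry, hH]
  have hHint : Integrable (Function.uncurry H) (ν.prod ν) := by
    refine Integrable.mono' (integrable_const (Kf * Kg)) hHm ?_
    have hprod : ν.prod ν = (volume.prod volume).restrict ((Set.Ioc s t) ×ˢ (Set.Ioc s t)) := by
      rw [hν, Measure.prod_restrict]
    rw [hprod]
    filter_upwards [ae_restrict_mem (measurableSet_Ioc.prod measurableSet_Ioc)] with p hp
    have h1 := hfb p.1 hp.1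
    have h2 := hgb p.2 hp.2
    have h3 : |S.indicator (1 : ℝ × ℝ → ℝ) p| ≤ 1 := by
      rw [Set.indicator_apply]; split <;> simp
    have hKf : 0 ≤ Kf := le_trans (abs_nonneg _) h1
    have hKg : 0 ≤ Kg := le_trans (abs_nonneg _) h2
    calc ‖Function.uncurry H p‖ = |f p.1| * |g p.2| * |S.indicator 1 p| := by
          simp [Function.uncurry, hH, abs_mul]
      _ ≤ Kf * Kg * 1 :=
          mul_le_mul (mul_le_mul h1 h2 (abs_nonneg _) hKf) h3 (abs_nonneg _)
            (by positivity)
      _ = Kf * Kg := mul_one _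
  calc ∫ r in s..t, f r * (∫ u in r..t, g u)
      = ∫ r, f r * (∫ u in r..t, g u) ∂ν := intervalIntegral.integral_of_le hst
    _ = ∫ r, ∫ u, H r u ∂ν ∂ν := by
        apply MeasureTheory.integral_congr_ae
        filter_upwards [ae_restrict_mem measurableSet_Ioc] with r hr
        have : ∀ᵐ u ∂ν, H r u = Set.indicator (Set.Ioc r t) g u * f r := by
          filter_upwards [ae_restrict_mem measurableSet_Ioc] with u hu
          simp only [hH, Set.indicator_apply, hS, Set.mem_setOf_eq, Set.mem_Ioc]
          by_cases h : r < u
          · simp only [h, hu.2, and_self, if_true, Pi.one_apply, mul_one]; ring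
          · simp [h]
        rw [MeasureTheory.integral_congr_ae this, MeasureTheory.integral_mul_const, MeasureTheory.integral_indicator measurableSet_Ioc,
          hν, Measure.restrict_restrict measurableSet_Ioc,
          Set.inter_eq_left.2 (Set.Ioc_subset_Ioc_left hr.1.le),
          ← intervalIntegral.integral_of_le hr.2]
        ring
    _ = ∫ u, ∫ r, H r u ∂ν ∂ν := integral_integral_swap hHint
    _ = ∫ u, (∫ r in s..u, f r) * g u ∂ν := by
        apply MeasureTheory.integral_congr_ae
        filter_upwards [ae_restrict_mem measurableSet_Ioc] with u hu
        have heq : ∀ r, H r u = Set.indicator (Set.Iio u) f r * g u := by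
          intro r
          simp only [hH, Set.indicator_apply, hS, Set.mem_setOf_eq, Set.mem_Iio]
          by_cases h : r < u
          · simp [h]
          · simp [h]
        simp only [heq]
        rw [MeasureTheory.integral_mul_const, MeasureTheory.integral_indicator measurableSet_Iio,
          hν, Measure.restrict_restrict measurableSet_Iio]
        have : Set.Iio u ∩ Set.Ioc s t = Set.Ioo s u := by
          ext r
          simp only [Set.mem_inter_iff, Set.mem_Iio, Set.mem_Ioc, Set.mem_Ioo]
          constructor
          · rintro ⟨h1, h2, h3⟩; exact ⟨h2, h1⟩
          · rintro ⟨h1, h2⟩; exact ⟨h2, h1, le_trans h2.le hu.2⟩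
        rw [this, ← MeasureTheory.integral_Ioc_eq_integral_Ioo,
          ← intervalIntegral.integral_of_le hu.1.le]
    _ = ∫ u in s..t, (∫ r in s..u, f r) * g u := (intervalIntegral.integral_of_le hst).symm

lemma intInt_lamee (hAc : ContinuousOn A (Set.Ico 0 T)) (hT : 0 < T) {s t : ℝ}
    (hs : 0 ≤ s) (hst : s ≤ t) (ht : t < T) :
    IntervalIntegrable (fun r => C.lam r * eeF C A r) volume s t := by
  have hsub : Set.Icc s t ⊆ Set.Ico 0 T :=
    fun x hx => ⟨le_trans hs hx.1, lt_of_le_of_lt hx.2 ht⟩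
  have hee_c : ContinuousOn (eeF C A) (Set.Icc s t) := (cont_ee hAc hT).mono hsub
  obtain ⟨Ke, hKe⟩ := isCompact_Icc.exists_bound_of_continuousOn hee_c
  obtain ⟨M, hM⟩ := C.lam_bdd
  apply intInt_of_bdd hst (C.lam_meas.aestronglyMeasurable.restrict.mul
    ((hee_c.mono Set.Ioc_subset_Icc_self).aestronglyMeasurable measurableSet_Ioc))
  intro x hx
  have hx' : x ∈ Set.Icc s t := Set.Ioc_subset_Icc_self hx
  have hx0T : x ∈ Set.Icc (0:ℝ) T := ⟨le_trans hs hx'.1, le_trans hx'.2 ht.le⟩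
  rw [Pi.mul_apply, abs_mul]
  exact mul_le_mul (hM x hx0T) (hKe x hx') (abs_nonneg _)
    (le_trans (abs_nonneg _) (hM x hx0T))

lemma key (hT : 0 < T) (hA : IsRiccatiSol T 0 C A) {s t : ℝ}
    (hs : 0 ≤ s) (hst : s ≤ t) (ht : t < T) :
    A t * eeF C A t = A s * eeF C A s - ∫ r in s..t, C.lam r * eeF C A r := by
  obtain ⟨hAc, hInt, -⟩ := hA
  set ee := eeF C A with hee
  set f : ℝ → ℝ := fun r => A r ^ 2 / C.eta r - C.lam r with hf
  set e' : ℝ → ℝ := fun u => -(A u / C.eta u) * ee u with he'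
  have hsub : Set.Icc s t ⊆ Set.Ico 0 T :=
    fun x hx => ⟨le_trans hs hx.1, lt_of_le_of_lt hx.2 ht⟩
  have hsubI : Set.Ioc s t ⊆ Set.Icc s t := Set.Ioc_subset_Icc_self
  have hsub0T : Set.Icc s t ⊆ Set.Icc 0 T :=
    fun x hx => ⟨le_trans hs hx.1, le_trans hx.2 ht.le⟩
  have hsT : s < T := lt_of_le_of_lt hst ht
  -- the integral equation with δ = 0
  have hAf : ∀ u ∈ Set.Icc s t, A u = A s + ∫ r in s..u, f r := by
    intro u hu
    have h := hInt s ⟨hs, hsT⟩ u (hsub hu)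
    simp only [hf]
    simpa only [zero_mul, sub_zero] using h
  -- continuity facts
  have hAcm : ContinuousOn A (Set.Icc s t) := hAc.mono hsub
  have hee_c : ContinuousOn ee (Set.Icc s t) := (cont_ee hAc hT).mono hsub
  have hBc : ContinuousOn (fun r => A r / C.eta r) (Set.Icc s t) := (contB hAc).mono hsub
  have hgc : ContinuousOn e' (Set.Icc s t) := hBc.neg.mul hee_c
  -- bounds
  obtain ⟨Ka, hKa⟩ := isCompact_Icc.exists_bound_of_continuousOn hAcm
  obtain ⟨Ke, hKe⟩ := isCompact_Icc.exists_bound_of_continuousOn hee_c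
  obtain ⟨Ki, hKi⟩ := isCompact_Icc.exists_bound_of_continuousOn
    (((eta_cont C).mono hsub0T).inv₀ (fun x hx => (C.eta_pos x (hsub0T hx)).ne'))
  obtain ⟨M, hM⟩ := C.lam_bdd
  have hM0 : 0 ≤ M := le_trans (abs_nonneg _) (hM 0 ⟨le_rfl, hT.le⟩)
  have hKa0 : 0 ≤ Ka := le_trans (norm_nonneg _) (hKa s ⟨le_rfl, hst⟩)
  have hKe0 : 0 ≤ Ke := le_trans (norm_nonneg _) (hKe s ⟨le_rfl, hst⟩)
  have hKi0 : 0 ≤ Ki := le_trans (norm_nonneg _) (hKi s ⟨le_rfl, hst⟩)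
  have habs : ∀ x ∈ Set.Icc s t, |A x ^ 2 / C.eta x| ≤ Ka ^ 2 * Ki := by
    intro x hx
    have h1 : |A x| ≤ Ka := hKa x hx
    have h2 : |(C.eta x)⁻¹| ≤ Ki := hKi x hx
    have : A x ^ 2 / C.eta x = A x ^ 2 * (C.eta x)⁻¹ := div_eq_mul_inv _ _
    rw [this, abs_mul, abs_pow]
    exact mul_le_mul (pow_le_pow_left₀ (abs_nonneg _) h1 2) h2 (abs_nonneg _) (by positivity)
  have hfb : ∀ x ∈ Set.Icc s t, |f x| ≤ Ka ^ 2 * Ki + M := by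
    intro x hx
    have h3 : |C.lam x| ≤ M := hM x (hsub0T hx)
    calc |f x| ≤ |A x ^ 2 / C.eta x| + |C.lam x| := abs_sub _ _
      _ ≤ Ka ^ 2 * Ki + M := add_le_add (habs x hx) h3
  have hgb : ∀ x ∈ Set.Icc s t, |e' x| ≤ Ka * Ki * Ke := by
    intro x hx
    have h1 : |A x / C.eta x| ≤ Ka * Ki := by
      rw [div_eq_mul_inv, abs_mul]
      exact mul_le_mul (hKa x hx) (hKi x hx) (abs_nonneg _) hKa0
    calc |e' x| = |A x / C.eta x| * |ee x| := by rw [he']; rw [abs_mul, abs_neg]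
      _ ≤ Ka * Ki * Ke := mul_le_mul h1 (hKe x hx) (abs_nonneg _) (by positivity)
  -- measurability
  have heem : AEStronglyMeasurable ee (volume.restrict (Set.Ioc s t)) :=
    (hee_c.mono hsubI).aestronglyMeasurable measurableSet_Ioc
  have hfm : AEStronglyMeasurable f (volume.restrict (Set.Ioc s t)) := by
    have h1 : ContinuousOn (fun x => A x ^ 2 / C.eta x) (Set.Icc s t) :=
      (hAcm.pow 2).div ((eta_cont C).mono hsub0T)
        (fun x hx => (C.eta_pos x (hsub0T hx)).ne')
    exact ((h1.mono hsubI).aestronglyMeasurable measurableSet_Ioc).sub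
      C.lam_meas.aestronglyMeasurable.restrict
  have hgm : AEStronglyMeasurable e' (volume.restrict (Set.Ioc s t)) :=
    (hgc.mono hsubI).aestronglyMeasurable measurableSet_Ioc
  -- FTC for ee
  have h_ftc : ∀ r ∈ Set.Icc s t, ∫ u in r..t, e' u = ee t - ee r := by
    intro r hr
    apply ftc2 hr.2 (hee_c.mono (Set.Icc_subset_Icc hr.1 le_rfl))
    · intro x hx
      exact hasDerivAt_ee hAc ⟨lt_of_le_of_lt (le_trans hs hr.1) hx.1, lt_trans hx.2 ht⟩
    · apply ContinuousOn.intervalIntegrable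
      rw [Set.uIcc_of_le hr.2]
      exact hgc.mono (Set.Icc_subset_Icc hr.1 le_rfl)
  -- interval integrabilities
  have i1 : IntervalIntegrable (fun r => f r * ee r) volume s t := by
    apply intInt_of_bdd hst (hfm.mul heem)
    intro x hx
    rw [Pi.mul_apply, abs_mul]
    exact mul_le_mul (hfb x (hsubI hx)) (hKe x (hsubI hx)) (abs_nonneg _)
      (by nlinarith)
  have i2 : IntervalIntegrable (fun r => f r * (∫ u in r..t, e' u)) volume s t := by
    apply intInt_of_bdd hst (K := (Ka ^ 2 * Ki + M) * (2 * Ke))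
    · have h0 : AEStronglyMeasurable (fun r => f r * (ee t - ee r))
          (volume.restrict (Set.Ioc s t)) :=
        hfm.mul (aestronglyMeasurable_const.sub heem)
      apply h0.congr
      filter_upwards [ae_restrict_mem measurableSet_Ioc] with r hr
      rw [h_ftc r (hsubI hr)]
    · intro x hx
      rw [h_ftc x (hsubI hx), abs_mul]
      have h1 : |ee t - ee x| ≤ 2 * Ke := by
        calc |ee t - ee x| ≤ |ee t| + |ee x| := abs_sub _ _
          _ ≤ 2 * Ke := by
            have := hKe t ⟨hst, le_rfl⟩; have := hKe x (hsubI hx); simp only [Real.norm_eq_abs] at *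
            linarith
      exact mul_le_mul (hfb x (hsubI hx)) h1 (abs_nonneg _) (by nlinarith)
  have i3 : IntervalIntegrable (fun u => A s * e' u) volume s t := by
    apply ContinuousOn.intervalIntegrable
    rw [Set.uIcc_of_le hst]
    exact continuousOn_const.mul hgc
  have i4 : IntervalIntegrable (fun u => (A u - A s) * e' u) volume s t := by
    apply ContinuousOn.intervalIntegrable
    rw [Set.uIcc_of_le hst]
    exact (hAcm.sub continuousOn_const).mul hgc
  -- the Fubini step
  have h_fub : ∫ r in s..t, f r * (∫ u in r..t, e' u)
      = ∫ u in s..t, (∫ r in s..u, f r) * e' u :=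
    swap_tri hst hfm hgm (fun x hx => hfb x (hsubI hx)) (fun x hx => hgb x (hsubI hx))
  -- assembling
  have e1 : A t * ee t - A s * ee s = A s * (ee t - ee s) + (∫ r in s..t, f r) * ee t := by
    have h0 := hAf t ⟨hst, le_rfl⟩
    rw [h0]; ring
  have e2 : A s * (ee t - ee s) = ∫ u in s..t, A s * e' u := by
    rw [intervalIntegral.integral_const_mul, h_ftc s ⟨le_rfl, hst⟩]
  have e3 : (∫ r in s..t, f r) * ee t = ∫ r in s..t, f r * ee t :=
    (intervalIntegral.integral_mul_const (ee t) f).symm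
  have e4 : ∫ r in s..t, f r * ee t
      = (∫ r in s..t, f r * ee r) + ∫ r in s..t, f r * (∫ u in r..t, e' u) := by
    rw [← intervalIntegral.integral_add i1 i2]
    apply intervalIntegral.integral_congr
    intro r hr
    rw [Set.uIcc_of_le hst] at hr
    show f r * ee t = f r * ee r + f r * (∫ u in r..t, e' u)
    rw [h_ftc r hr]; ring
  have e6 : ∫ u in s..t, (∫ r in s..u, f r) * e' u = ∫ u in s..t, (A u - A s) * e' u := by
    apply intervalIntegral.integral_congr
    intro u hu
    rw [Set.uIcc_of_le hst] at hu
    have h0 := hAf u hu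
    have h0' : (∫ r in s..u, f r) = A u - A s := by linarith
    show (∫ r in s..u, f r) * e' u = (A u - A s) * e' u
    rw [h0']
  have e7 : (∫ u in s..t, A s * e' u) + ((∫ r in s..t, f r * ee r)
        + ∫ u in s..t, (A u - A s) * e' u)
      = ∫ u in s..t, (A s * e' u + (f u * ee u + (A u - A s) * e' u)) := by
    rw [intervalIntegral.integral_add i3 (i1.add i4), intervalIntegral.integral_add i1 i4]
  have e8 : ∫ u in s..t, (A s * e' u + (f u * ee u + (A u - A s) * e' u))
      = -∫ u in s..t, C.lam u * ee u := by
    rw [← intervalIntegral.integral_neg]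
    apply intervalIntegral.integral_congr
    intro u _
    simp only [hf, he']
    ring
  linarith [e1, e2, e3, e4, e6, e7, e8, h_fub]

end Stmt1Aux

/-- For the solution `A` of the Riccati problem with `δ = 0`, the map
`t ↦ A_t · exp(-∫_0^t A_r/η_r dr)` is non-increasing on `[0,T)`, and its limit
`α⁰_T` as `t ↗ T` exists and lies in `(0,∞)`. -/
theorem stmt_1 (T : ℝ) (hT : 0 < T) (C : Coeffs T)
    (A : ℝ → ℝ) (hA : IsRiccatiSol T 0 C A) :
    (∀ s ∈ Set.Ico (0:ℝ) T, ∀ t ∈ Set.Ico (0:ℝ) T, s ≤ t →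
      A t * Real.exp (-∫ r in (0:ℝ)..t, A r / C.eta r) ≤
        A s * Real.exp (-∫ r in (0:ℝ)..s, A r / C.eta r)) ∧
    (∃ α : ℝ, 0 < α ∧
      Filter.Tendsto (fun t => A t * Real.exp (-∫ r in (0:ℝ)..t, A r / C.eta r))
        (nhdsWithin T (Set.Iio T)) (nhds α)) := by
  obtain ⟨hAc, hInt, hTop⟩ := id hA
  have hmono : ∀ s ∈ Set.Ico (0:ℝ) T, ∀ t ∈ Set.Ico (0:ℝ) T, s ≤ t →
      A t * Real.exp (-∫ r in (0:ℝ)..t, A r / C.eta r) ≤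
        A s * Real.exp (-∫ r in (0:ℝ)..s, A r / C.eta r) := by
    intro s hs t ht hst
    have hkey := Stmt1Aux.key hT hA hs.1 hst ht.2
    have hnn : 0 ≤ ∫ r in s..t, C.lam r * Stmt1Aux.eeF C A r := by
      apply intervalIntegral.integral_nonneg hst
      intro u hu
      exact mul_nonneg (C.lam_nonneg u ⟨le_trans hs.1 hu.1, le_trans hu.2 ht.2.le⟩)
        (Real.exp_pos _).le
    have hfin : A t * Stmt1Aux.eeF C A t ≤ A s * Stmt1Aux.eeF C A s := by linarith
    exact hfin
  refine ⟨hmono, ?_⟩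
  obtain ⟨M, hM⟩ := C.lam_bdd
  set Λ := max M 0 with hΛ
  have hΛ0 : 0 ≤ Λ := le_max_right _ _
  have hev : ∀ᶠ r in 𝓝[<] T, Λ * T + 1 ≤ A r := hTop.eventually_ge_atTop _
  obtain ⟨u, huT, hu⟩ := mem_nhdsLT_iff_exists_Ioo_subset.1 hev
  set s1 := (max u 0 + T) / 2 with hs1
  have hmax : max u 0 < T := max_lt huT hT
  have hs1a : max u 0 < s1 := by rw [hs1]; linarith
  have hs1T : s1 < T := by rw [hs1]; linarith [le_max_right u 0]
  have hs10 : 0 ≤ s1 := le_trans (le_max_right u 0) hs1a.le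
  have hA1 : ∀ r, s1 ≤ r → r < T → Λ * T + 1 ≤ A r := by
    intro r h1 h2
    exact hu ⟨lt_of_le_of_lt (le_max_left u 0) (lt_of_lt_of_le hs1a h1), h2⟩
  have hEle : ∀ r, s1 ≤ r → r < T → Stmt1Aux.eeF C A r ≤ Stmt1Aux.eeF C A s1 := by
    intro r h1 h2
    have hint1 : IntervalIntegrable (fun x => A x / C.eta x) volume 0 s1 :=
      Stmt1Aux.intIntB hAc le_rfl hs10 hs1T
    have hint2 : IntervalIntegrable (fun x => A x / C.eta x) volume s1 r :=
      Stmt1Aux.intIntB hAc hs10 h1 h2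
    have hsplit := intervalIntegral.integral_add_adjacent_intervals hint1 hint2
    have hpos : 0 ≤ ∫ x in s1..r, A x / C.eta x := by
      apply intervalIntegral.integral_nonneg h1
      intro x hx
      have hx0T : x ∈ Set.Icc (0:ℝ) T := ⟨le_trans hs10 hx.1, le_trans hx.2 h2.le⟩
      have hAx := hA1 x hx.1 (lt_of_le_of_lt hx.2 h2)
      have hAx0 : (0:ℝ) ≤ A x := by nlinarith
      exact div_nonneg hAx0 (C.eta_pos x hx0T).le
    simp only [Stmt1Aux.eeF]
    apply Real.exp_le_exp.2
    linarith
  have hlow : ∀ t ∈ Set.Ico s1 T, Stmt1Aux.eeF C A s1 ≤ A t * Stmt1Aux.eeF C A t := by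
    intro t ht
    have hkey := Stmt1Aux.key hT hA hs10 ht.1 ht.2
    have hint : IntervalIntegrable (fun r => C.lam r * Stmt1Aux.eeF C A r) volume s1 t :=
      Stmt1Aux.intInt_lamee hAc hT hs10 ht.1 ht.2
    have hptw : ∀ x ∈ Set.Icc s1 t, C.lam x * Stmt1Aux.eeF C A x ≤ Λ * Stmt1Aux.eeF C A s1 := by
      intro x hx
      have hx0T : x ∈ Set.Icc (0:ℝ) T :=
        ⟨le_trans hs10 hx.1, le_trans hx.2 ht.2.le⟩
      have h1 : C.lam x ≤ Λ := le_trans (le_of_abs_le (hM x hx0T)) (le_max_left M 0)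
      have h2 : Stmt1Aux.eeF C A x ≤ Stmt1Aux.eeF C A s1 :=
        hEle x hx.1 (lt_of_le_of_lt hx.2 ht.2)
      exact mul_le_mul h1 h2 (Real.exp_pos _).le hΛ0
    have hmono_int : (∫ r in s1..t, C.lam r * Stmt1Aux.eeF C A r)
        ≤ (t - s1) * (Λ * Stmt1Aux.eeF C A s1) := by
      have h1 := intervalIntegral.integral_mono_on ht.1 hint intervalIntegrable_const hptw
      rwa [intervalIntegral.integral_const, smul_eq_mul] at h1
    have hAs1 : Λ * T + 1 ≤ A s1 := hA1 s1 le_rfl hs1T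
    have hts1 : t - s1 ≤ T := by
      have := ht.2; linarith
    have hepos : 0 < Stmt1Aux.eeF C A s1 := Real.exp_pos _
    nlinarith [mul_le_mul_of_nonneg_right hts1 (mul_nonneg hΛ0 hepos.le),
      mul_le_mul_of_nonneg_right hAs1 hepos.le]
  have himg_ne : (((fun t => A t * Real.exp (-∫ r in (0:ℝ)..t, A r / C.eta r)) ''
      Set.Ico s1 T)).Nonempty := ⟨_, ⟨s1, ⟨le_rfl, hs1T⟩, rfl⟩⟩
  have hbdd : BddBelow ((fun t => A t * Real.exp (-∫ r in (0:ℝ)..t, A r / C.eta r)) ''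
      Set.Ico s1 T) := by
    refine ⟨Stmt1Aux.eeF C A s1, ?_⟩
    rintro y ⟨x, hx, rfl⟩
    exact hlow x hx
  refine ⟨sInf ((fun t => A t * Real.exp (-∫ r in (0:ℝ)..t, A r / C.eta r)) '' Set.Ico s1 T),
    ?_, ?_⟩
  · refine lt_of_lt_of_le (Real.exp_pos (-∫ r in (0:ℝ)..s1, A r / C.eta r)) (le_csInf himg_ne ?_)
    rintro y ⟨x, hx, rfl⟩
    exact hlow x hx
  · rw [tendsto_order]
    constructor
    · intro b hb
      filter_upwards [Ioo_mem_nhdsLT_of_mem (⟨hs1T, le_rfl⟩ : T ∈ Set.Ioc s1 T)] with t ht'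
      have h1 : sInf ((fun t => A t * Real.exp (-∫ r in (0:ℝ)..t, A r / C.eta r)) ''
          Set.Ico s1 T) ≤ A t * Real.exp (-∫ r in (0:ℝ)..t, A r / C.eta r) :=
        csInf_le hbdd ⟨t, ⟨ht'.1.le, ht'.2⟩, rfl⟩
      linarith
    · intro b hb
      obtain ⟨y, ⟨x, hx, rfl⟩, hyb⟩ := (csInf_lt_iff hbdd himg_ne).1 hb
      filter_upwards [Ioo_mem_nhdsLT_of_mem (⟨hx.2, le_rfl⟩ : T ∈ Set.Ioc x T)] with t ht'
      have h1 : A t * Real.exp (-∫ r in (0:ℝ)..t, A r / C.eta r) ≤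
          A x * Real.exp (-∫ r in (0:ℝ)..x, A r / C.eta r) :=
        hmono x ⟨le_trans hs10 hx.1, hx.2⟩ t ⟨le_trans (le_trans hs10 hx.1) ht'.1.le, ht'.2⟩
          ht'.1.le
      linarith


end
end

section
/- For every δ ∈ [0,1] the map t ↦ α^δ_t := A^δ_t·exp(−∫_0^t (A^δ_r − δκ_r)/η_r dr) is non-increasing on [0,T), the limit α^δ_T := lim_{t↗T} α^δ_t exists and lies in (0,∞), and moreover lim_{δ→0} α^δ_T = α⁰_T. -/
open MeasureTheory intervalIntegral Set Filter Topology

noncomputable section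

namespace Stmt3Aux

lemma triangle_swap {s t : ℝ} (hst : s ≤ t) {f g : ℝ → ℝ}
    (hf : IntegrableOn f (Set.Ioc s t)) (hg : IntegrableOn g (Set.Ioc s t)) :
    (∫ u in s..t, g u * ∫ r in s..u, f r) = ∫ u in s..t, f u * ∫ r in u..t, g r := by
  set μ := volume.restrict (Set.Ioc s t) with hμ
  have hK : Integrable (Function.uncurry fun u r => g u * Set.indicator (Set.Iic u) f r)
      (μ.prod μ) := by
    have h1 : Integrable (fun p : ℝ × ℝ => g p.1 * f p.2) (μ.prod μ) := hg.mul_prod hf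
    have h2 : Integrable
        (fun p : ℝ × ℝ => Set.indicator {q : ℝ × ℝ | q.2 ≤ q.1} (fun _ => (1:ℝ)) p *
          (g p.1 * f p.2)) (μ.prod μ) := by
      refine h1.bdd_mul (c := 1) ?_ (Filter.Eventually.of_forall ?_)
      · refine (StronglyMeasurable.aestronglyMeasurable ?_)
        refine (stronglyMeasurable_const.indicator ?_)
        exact measurableSet_le measurable_snd measurable_fst
      · intro x
        by_cases hx : x ∈ {q : ℝ × ℝ | q.2 ≤ q.1} <;>
          simp [Set.indicator_apply, hx]
    refine h2.congr (Filter.Eventually.of_forall fun p => ?_)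
    rcases p with ⟨u, r⟩
    by_cases h : r ≤ u <;>
      simp [Function.uncurry, Set.indicator_apply, h, mul_comm]
  have swap := MeasureTheory.integral_integral_swap hK
  have lhs : (∫ u in s..t, g u * ∫ r in s..u, f r)
      = ∫ u, (∫ r, g u * Set.indicator (Set.Iic u) f r ∂μ) ∂μ := by
    rw [intervalIntegral.integral_of_le hst]
    refine setIntegral_congr_fun measurableSet_Ioc fun u hu => ?_
    rw [MeasureTheory.integral_const_mul, hμ, setIntegral_indicator measurableSet_Iic]
    have : Set.Ioc s t ∩ Set.Iic u = Set.Ioc s u := by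
      ext r; simp only [Set.mem_inter_iff, Set.mem_Ioc, Set.mem_Iic]
      exact ⟨fun h => ⟨h.1.1, h.2⟩, fun h => ⟨⟨h.1, h.2.trans hu.2⟩, h.2⟩⟩
    rw [this, intervalIntegral.integral_of_le hu.1.le]
  have rhs : (∫ u in s..t, f u * ∫ r in u..t, g r)
      = ∫ r, (∫ u, g u * Set.indicator (Set.Iic u) f r ∂μ) ∂μ := by
    rw [intervalIntegral.integral_of_le hst]
    refine setIntegral_congr_fun measurableSet_Ioc fun r hr => ?_
    have hpt : ∀ u, g u * Set.indicator (Set.Iic u) f r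
        = Set.indicator (Set.Ici r) g u * f r := by
      intro u
      by_cases h : r ≤ u <;>
        simp [Set.indicator_apply, h, mul_comm]
    simp_rw [hpt]
    rw [MeasureTheory.integral_mul_const, hμ, setIntegral_indicator measurableSet_Ici]
    have : Set.Ioc s t ∩ Set.Ici r = Set.Icc r t := by
      ext u; simp only [Set.mem_inter_iff, Set.mem_Ioc, Set.mem_Icc, Set.mem_Ici]
      exact ⟨fun h => ⟨h.2, h.1.2⟩, fun h => ⟨⟨lt_of_lt_of_le hr.1 h.1, h.2⟩, h.1⟩⟩
    rw [this, MeasureTheory.integral_Icc_eq_integral_Ioc,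
      ← intervalIntegral.integral_of_le hr.2, mul_comm]
  rw [lhs, rhs]
  exact swap

lemma integrableOn_mul_cont {a b : ℝ} {f G : ℝ → ℝ} (hf : IntegrableOn f (Set.Icc a b))
    (hGc : ContinuousOn G (Set.Icc a b)) :
    IntegrableOn (fun u => f u * G u) (Set.Icc a b) := by
  obtain ⟨Cb, hCb⟩ := (isCompact_Icc (a := a) (b := b)).exists_bound_of_continuousOn hGc
  refine Integrable.mono' (hf.norm.smul Cb) ?_ ?_
  · exact (hf.aestronglyMeasurable.mul (hGc.aestronglyMeasurable measurableSet_Icc))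
  · refine (MeasureTheory.ae_restrict_iff' measurableSet_Icc).2
      (Filter.Eventually.of_forall fun x hx => ?_)
    simp only [smul_eq_mul, Real.norm_eq_abs, abs_mul]
    calc |f x| * |G x| ≤ |f x| * Cb :=
          mul_le_mul_of_nonneg_left ((Real.norm_eq_abs _ ▸ hCb x hx)) (abs_nonneg _)
      _ = Cb * |f x| := mul_comm _ _

lemma integralform_mul {a b : ℝ} {F f G g : ℝ → ℝ}
    (hf : IntegrableOn f (Set.Icc a b)) (hg : IntegrableOn g (Set.Icc a b))
    (hFc : ContinuousOn F (Set.Icc a b)) (hGc : ContinuousOn G (Set.Icc a b))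
    (hF : ∀ s ∈ Set.Icc a b, ∀ t ∈ Set.Icc a b, F t = F s + ∫ u in s..t, f u)
    (hG : ∀ s ∈ Set.Icc a b, ∀ t ∈ Set.Icc a b, G t = G s + ∫ u in s..t, g u) :
    ∀ s ∈ Set.Icc a b, ∀ t ∈ Set.Icc a b,
      F t * G t = F s * G s + ∫ u in s..t, (f u * G u + F u * g u) := by
  have hfG : IntegrableOn (fun u => f u * G u) (Set.Icc a b) := integrableOn_mul_cont hf hGc
  have hFg : IntegrableOn (fun u => F u * g u) (Set.Icc a b) := by
    have := integrableOn_mul_cont hg hFc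
    exact this.congr_fun (fun x _ => mul_comm _ _) measurableSet_Icc
  -- interval integrability of everything on subintervals
  have II : ∀ {h : ℝ → ℝ}, IntegrableOn h (Set.Icc a b) → ∀ s ∈ Set.Icc a b,
      ∀ t ∈ Set.Icc a b, IntervalIntegrable h volume s t := by
    intro h hh s hs t ht
    rw [intervalIntegrable_iff]
    exact hh.mono_set (Set.uIoc_subset_uIcc.trans (Set.uIcc_subset_Icc hs ht))
  have key : ∀ s ∈ Set.Icc a b, ∀ t ∈ Set.Icc a b, s ≤ t →
      F t * G t = F s * G s + ∫ u in s..t, (f u * G u + F u * g u) := by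
    intro s hs t ht hst
    have hsub : Set.uIcc s t ⊆ Set.Icc a b := Set.uIcc_subset_Icc hs ht
    have hmem : ∀ u ∈ Set.uIcc s t, u ∈ Set.Icc a b := fun u hu => hsub hu
    have hIf := II hf s hs t ht
    have hIg := II hg s hs t ht
    have hIfG := II hfG s hs t ht
    have hIFg := II hFg s hs t ht
    set P := ∫ u in s..t, f u with hP
    set Q := ∫ u in s..t, g u with hQ
    have hPF : F t = F s + P := hF s hs t ht
    have hQG : G t = G s + Q := hG s hs t ht
    -- X = ∫ f G
    have hIfGs : IntervalIntegrable (fun u => f u * G s) volume s t := hIf.mul_const _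
    have hIgFs : IntervalIntegrable (fun u => g u * F s) volume s t := hIg.mul_const _
    have hIfd : IntervalIntegrable (fun u => f u * (G u - G s)) volume s t := by
      have : (fun u => f u * (G u - G s)) = fun u => f u * G u - f u * G s := by
        funext u; ring
      rw [this]; exact hIfG.sub hIfGs
    have hIgd : IntervalIntegrable (fun u => g u * (F u - F s)) volume s t := by
      have : (fun u => g u * (F u - F s)) = fun u => F u * g u - g u * F s := by
        funext u; ring
      rw [this]; exact hIFg.sub hIgFs
    have eX : (∫ u in s..t, f u * G u)
        = (∫ u in s..t, f u * G s) + ∫ u in s..t, f u * (G u - G s) := by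
      rw [← intervalIntegral.integral_add hIfGs hIfd]
      refine intervalIntegral.integral_congr fun u _ => ?_
      ring
    have eY : (∫ u in s..t, F u * g u)
        = (∫ u in s..t, g u * F s) + ∫ u in s..t, g u * (F u - F s) := by
      rw [← intervalIntegral.integral_add hIgFs hIgd]
      refine intervalIntegral.integral_congr fun u _ => ?_
      ring
    have eT2 : (∫ u in s..t, g u * (F u - F s)) = ∫ u in s..t, f u * (G t - G u) := by
      have e1 : (∫ u in s..t, g u * (F u - F s)) = ∫ u in s..t, g u * ∫ r in s..u, f r := by
        refine intervalIntegral.integral_congr fun u hu => ?_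
        have := hF s hs u (hmem u hu)
        rw [this]; ring_nf
      have e2 := triangle_swap hst
        (hf.mono_set (Set.Ioc_subset_Icc_self.trans (Set.Icc_subset_Icc hs.1 ht.2)))
        (hg.mono_set (Set.Ioc_subset_Icc_self.trans (Set.Icc_subset_Icc hs.1 ht.2)))
      have e3 : (∫ u in s..t, f u * ∫ r in u..t, g r) = ∫ u in s..t, f u * (G t - G u) := by
        refine intervalIntegral.integral_congr fun u hu => ?_
        have := hG u (hmem u hu) t ht
        rw [this]; ring_nf
      rw [e1, e2, e3]
    have hIfd2 : IntervalIntegrable (fun u => f u * (G t - G u)) volume s t := by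
      have : (fun u => f u * (G t - G u)) = fun u => f u * G t - f u * G u := by
        funext u; ring
      rw [this]; exact (hIf.mul_const _).sub hIfG
    have eSum : (∫ u in s..t, f u * (G u - G s)) + (∫ u in s..t, f u * (G t - G u))
        = P * Q := by
      rw [← intervalIntegral.integral_add hIfd hIfd2]
      have : (∫ u in s..t, (f u * (G u - G s) + f u * (G t - G u)))
          = ∫ u in s..t, f u * (G t - G s) := by
        refine intervalIntegral.integral_congr fun u _ => ?_
        ring
      rw [this]
      rw [intervalIntegral.integral_mul_const]
      rw [hQG, ← hP]; ring_nf
    have eInt : (∫ u in s..t, (f u * G u + F u * g u))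
        = (∫ u in s..t, f u * G u) + ∫ u in s..t, F u * g u :=
      intervalIntegral.integral_add hIfG hIFg
    have eCf : (∫ u in s..t, f u * G s) = P * G s := intervalIntegral.integral_mul_const _ _
    have eCg : (∫ u in s..t, g u * F s) = Q * F s := intervalIntegral.integral_mul_const _ _
    rw [eInt, eX, eY, eT2, eCf, eCg]
    have expand : F t * G t = F s * G s + P * G s + Q * F s + P * Q := by
      rw [hPF, hQG]; ring
    linarith [expand, eSum]
  intro s hs t ht
  rcases le_total s t with hst | hts
  · exact key s hs t ht hst
  · have h2 := key t ht s hs hts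
    have : (∫ u in s..t, (f u * G u + F u * g u))
        = - ∫ u in t..s, (f u * G u + F u * g u) := intervalIntegral.integral_symm t s
    rw [this]
    linarith [h2]

lemma exp_form {a b : ℝ} (hab : a ≤ b) {c : ℝ → ℝ} (hc : ContinuousOn c (Set.Icc a b)) :
    (∀ s ∈ Set.Icc a b, ∀ t ∈ Set.Icc a b,
      Real.exp (∫ r in a..t, c r) = Real.exp (∫ r in a..s, c r) +
        ∫ u in s..t, c u * Real.exp (∫ r in a..u, c r)) ∧
    ContinuousOn (fun t => Real.exp (∫ r in a..t, c r)) (Set.Icc a b) := by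
  set π : ℝ → ℝ := fun x => max a (min x b) with hπ
  have hπc : Continuous π := continuous_const.max (continuous_id.min continuous_const)
  have hπmem : ∀ x, π x ∈ Set.Icc a b := fun x =>
    ⟨le_max_left _ _, max_le hab (min_le_right _ _)⟩
  set ct : ℝ → ℝ := fun x => c (π x) with hctdef
  have hct : Continuous ct := hc.comp_continuous hπc hπmem
  have hcteq : ∀ x ∈ Set.Icc a b, ct x = c x := by
    intro x hx
    have : π x = x := by
      rw [hπ]; dsimp only
      rw [min_eq_left hx.2, max_eq_right hx.1]
    rw [hctdef]; dsimp only; rw [this]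
  set P : ℝ → ℝ := fun t => ∫ r in a..t, ct r with hPdef
  have hP : ∀ t, HasDerivAt P (ct t) t := by
    intro t
    exact intervalIntegral.integral_hasDerivAt_right (hct.intervalIntegrable _ _)
      (hct.stronglyMeasurable.stronglyMeasurableAtFilter) hct.continuousAt
  have hPc : Continuous P := by
    rw [continuous_iff_continuousAt]; exact fun t => (hP t).continuousAt
  have hGd : ∀ t, HasDerivAt (fun u => Real.exp (P u)) (ct t * Real.exp (P t)) t := by
    intro t
    have := (hP t).exp
    simpa [mul_comm] using this
  have hGc : Continuous (fun u => Real.exp (P u)) := Real.continuous_exp.comp hPc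
  have hPeq : ∀ t ∈ Set.Icc a b, P t = ∫ r in a..t, c r := by
    intro t ht
    refine intervalIntegral.integral_congr fun r hr => ?_
    exact hcteq r (Set.uIcc_subset_Icc ⟨le_refl a, hab⟩ ht hr)
  constructor
  · intro s hs t ht
    have ftc : (∫ u in s..t, ct u * Real.exp (P u))
        = Real.exp (P t) - Real.exp (P s) := by
      refine intervalIntegral.integral_eq_sub_of_hasDerivAt (fun x _ => hGd x) ?_
      exact (hct.mul hGc).intervalIntegrable _ _
    have congr1 : (∫ u in s..t, c u * Real.exp (∫ r in a..u, c r))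
        = ∫ u in s..t, ct u * Real.exp (P u) := by
      refine intervalIntegral.integral_congr fun u hu => ?_
      have hu' : u ∈ Set.Icc a b := Set.uIcc_subset_Icc hs ht hu
      rw [hcteq u hu', hPeq u hu']
    rw [congr1, ftc, hPeq s hs, hPeq t ht]
    ring
  · refine ContinuousOn.congr (hGc.continuousOn) fun t ht => ?_
    rw [hPeq t ht]


def EFx (T δ : ℝ) (C : Coeffs T) (A : ℝ → ℝ) (t : ℝ) : ℝ :=
  Real.exp (-∫ r in (0:ℝ)..t, (A r - δ * C.kap r) / C.eta r)

def alFx (T δ : ℝ) (C : Coeffs T) (A : ℝ → ℝ) (t : ℝ) : ℝ := A t * EFx T δ C A t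

def aTFx (T δ : ℝ) (C : Coeffs T) (A : ℝ → ℝ) : ℝ :=
  A 0 - ∫ r in Set.Ioo (0:ℝ) T, C.lam r * EFx T δ C A r

lemma contOn_Ico_of_Icc {T : ℝ} {F : ℝ → ℝ}
    (h : ∀ b ∈ Set.Ico (0:ℝ) T, ContinuousOn F (Set.Icc 0 b)) :
    ContinuousOn F (Set.Ico 0 T) := by
  intro x hx
  have hb : (x + T) / 2 ∈ Set.Ico (0:ℝ) T :=
    ⟨by linarith [hx.1, hx.2], by linarith [hx.2]⟩
  have hxb : x ∈ Set.Icc (0:ℝ) ((x + T)/2) := ⟨hx.1, by linarith [hx.2]⟩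
  have hcw := (h _ hb x hxb).mono
    (show Set.Ico (0:ℝ) T ∩ Set.Iio ((x + T)/2) ⊆ Set.Icc 0 ((x + T)/2) from
      fun y hy => ⟨hy.1.1, le_of_lt hy.2⟩)
  have : Set.Iio ((x + T)/2) ∈ 𝓝 x := Iio_mem_nhds (by linarith [hx.2])
  exact (continuousWithinAt_inter this).1 hcw



lemma coeff_facts {T : ℝ} (C : Coeffs T) :
    ContinuousOn C.eta (Set.Icc 0 T) ∧ ContinuousOn C.kap (Set.Icc 0 T) ∧
    (∀ t ∈ Set.Icc (0:ℝ) T, C.eta t ≠ 0) ∧ IntegrableOn C.lam (Set.Icc 0 T) := by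
  refine ⟨fun t ht => (C.eta_hasDeriv t ht).continuousWithinAt,
    fun t ht => (C.kap_hasDeriv t ht).continuousWithinAt,
    fun t ht => ne_of_gt (C.eta_pos t ht), ?_⟩
  obtain ⟨M, hM⟩ := C.lam_bdd
  refine Integrable.mono'
    (integrableOn_const (C := M) measure_Icc_lt_top.ne)
    (C.lam_meas.aestronglyMeasurable.restrict) ?_
  · refine (MeasureTheory.ae_restrict_iff' measurableSet_Icc).2
      (Filter.Eventually.of_forall fun x hx => ?_)
    simpa [Real.norm_eq_abs] using hM x hx

lemma key_identity {T δ : ℝ} (hT : 0 < T) (C : Coeffs T) {A : ℝ → ℝ}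
    (hA : IsRiccatiSol T δ C A) :
    (∀ b ∈ Set.Ico (0:ℝ) T, ∀ s ∈ Set.Icc 0 b, ∀ t ∈ Set.Icc 0 b,
      alFx T δ C A t = alFx T δ C A s - ∫ u in s..t, C.lam u * EFx T δ C A u) ∧
    ContinuousOn (EFx T δ C A) (Set.Ico 0 T) := by
  obtain ⟨hηc, hκc, hηne, hlint⟩ := coeff_facts C
  have main : ∀ b ∈ Set.Ico (0:ℝ) T,
      (∀ s ∈ Set.Icc 0 b, ∀ t ∈ Set.Icc 0 b,
        alFx T δ C A t = alFx T δ C A s - ∫ u in s..t, C.lam u * EFx T δ C A u) ∧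
      ContinuousOn (EFx T δ C A) (Set.Icc 0 b) := by
    intro b hb
    have sub0b : Set.Icc (0:ℝ) b ⊆ Set.Ico 0 T :=
      fun x hx => ⟨hx.1, lt_of_le_of_lt hx.2 hb.2⟩
    have subIccT : Set.Icc (0:ℝ) b ⊆ Set.Icc 0 T :=
      fun x hx => ⟨hx.1, hx.2.trans hb.2.le⟩
    have hAc : ContinuousOn A (Set.Icc 0 b) := hA.1.mono sub0b
    set c : ℝ → ℝ := fun r => -((A r - δ * C.kap r) / C.eta r) with hcdef
    have hcc : ContinuousOn c (Set.Icc 0 b) := by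
      refine ContinuousOn.neg ?_
      exact ((hAc.sub (continuousOn_const.mul (hκc.mono subIccT))).div
        (hηc.mono subIccT) (fun x hx => hηne x (subIccT hx)))
    have hEFeq : ∀ t : ℝ, EFx T δ C A t = Real.exp (∫ r in (0:ℝ)..t, c r) := by
      intro t
      rw [hcdef]
      rw [EFx, intervalIntegral.integral_neg]
    obtain ⟨formE, contE⟩ := exp_form hb.1 hcc
    have contE' : ContinuousOn (EFx T δ C A) (Set.Icc 0 b) := by
      refine ContinuousOn.congr contE fun t ht => (hEFeq t)
    have formE' : ∀ s ∈ Set.Icc (0:ℝ) b, ∀ t ∈ Set.Icc (0:ℝ) b,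
        EFx T δ C A t = EFx T δ C A s + ∫ u in s..t, c u * EFx T δ C A u := by
      intro s hs t ht
      have := formE s hs t ht
      simp only [← hEFeq] at this
      exact this
    set f : ℝ → ℝ := fun r => A r ^ 2 / C.eta r - δ * (C.kap r / C.eta r) * A r - C.lam r
      with hfdef
    have hFform : ∀ s ∈ Set.Icc (0:ℝ) b, ∀ t ∈ Set.Icc (0:ℝ) b,
        A t = A s + ∫ u in s..t, f u := fun s hs t ht =>
      hA.2.1 s (sub0b hs) t (sub0b ht)
    have hfint : IntegrableOn f (Set.Icc 0 b) := by
      have hcont : ContinuousOn (fun r => A r ^ 2 / C.eta r - δ * (C.kap r / C.eta r) * A r)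
          (Set.Icc 0 b) := by
        refine ContinuousOn.sub ?_ ?_
        · exact (hAc.pow 2).div (hηc.mono subIccT) (fun x hx => hηne x (subIccT hx))
        · exact (continuousOn_const.mul ((hκc.mono subIccT).div (hηc.mono subIccT)
            (fun x hx => hηne x (subIccT hx)))).mul hAc
      exact (hcont.integrableOn_compact isCompact_Icc).sub (hlint.mono_set subIccT)
    have hgint : IntegrableOn (fun u => c u * EFx T δ C A u) (Set.Icc 0 b) :=
      (hcc.mul contE').integrableOn_compact isCompact_Icc
    have prodform := integralform_mul hfint hgint hAc contE' hFform formE'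
    refine ⟨fun s hs t ht => ?_, contE'⟩
    have := prodform s hs t ht
    have hcongr : (∫ u in s..t, (f u * EFx T δ C A u + A u * (c u * EFx T δ C A u)))
        = ∫ u in s..t, -(C.lam u * EFx T δ C A u) := by
      refine intervalIntegral.integral_congr fun u hu => ?_
      have hu' : u ∈ Set.Icc (0:ℝ) b := Set.uIcc_subset_Icc hs ht hu
      have hη : C.eta u ≠ 0 := hηne u (subIccT hu')
      have key : f u + A u * c u = -C.lam u := by
        rw [hfdef, hcdef]
        dsimp only
        field_simp
        ring
      calc f u * EFx T δ C A u + A u * (c u * EFx T δ C A u)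
          = (f u + A u * c u) * EFx T δ C A u := by ring
        _ = -(C.lam u * EFx T δ C A u) := by rw [key]; ring
    rw [hcongr, intervalIntegral.integral_neg] at this
    show alFx T δ C A t = alFx T δ C A s - ∫ u in s..t, C.lam u * EFx T δ C A u
    rw [alFx, alFx]
    linarith [this]
  refine ⟨fun b hb => (main b hb).1, ?_⟩
  exact contOn_Ico_of_Icc (fun b hb => (main b hb).2)



lemma main_aux {T δ : ℝ} (hT : 0 < T) (C : Coeffs T) (hd0 : 0 ≤ δ) {A : ℝ → ℝ}
    (hA : IsRiccatiSol T δ C A) :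
    (∀ s ∈ Set.Ico (0:ℝ) T, ∀ t ∈ Set.Ico (0:ℝ) T, s ≤ t →
        alFx T δ C A t ≤ alFx T δ C A s) ∧
    (∀ t ∈ Set.Ico (0:ℝ) T, 0 < A t) ∧
    (∃ m, 0 < m ∧ ∀ t ∈ Set.Ico (0:ℝ) T, m ≤ A t) ∧
    Filter.Tendsto (EFx T δ C A) (𝓝[<] T) (𝓝 0) ∧
    IntegrableOn (fun r => C.lam r * EFx T δ C A r) (Set.Ioo 0 T) ∧
    Filter.Tendsto (alFx T δ C A) (𝓝[<] T) (𝓝 (aTFx T δ C A)) ∧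
    0 < aTFx T δ C A := by
  obtain ⟨keyId, hEFcont⟩ := key_identity hT C hA
  obtain ⟨hηc, hκc, hηne, hlint⟩ := coeff_facts C
  obtain ⟨M0, hM0⟩ := C.lam_bdd
  set Ml := max M0 0 with hMldef
  have hMl0 : (0:ℝ) ≤ Ml := le_max_right _ _
  have hMl : ∀ t ∈ Set.Icc (0:ℝ) T, C.lam t ≤ Ml :=
    fun t ht => (le_abs_self _).trans ((hM0 t ht).trans (le_max_left _ _))
  set EFf := EFx T δ C A with hEFf
  set alf := alFx T δ C A with half
  have half' : ∀ t, alf t = A t * EFf t := fun t => rfl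
  have hEFpos : ∀ t, 0 < EFf t := fun t => Real.exp_pos _
  -- P1 : monotone
  have P1 : ∀ s ∈ Set.Ico (0:ℝ) T, ∀ t ∈ Set.Ico (0:ℝ) T, s ≤ t → alf t ≤ alf s := by
    intro s hs t ht hst
    have hid := keyId t ht s ⟨hs.1, hst⟩ t ⟨hs.1.trans hst, le_refl t⟩
    have hnn : 0 ≤ ∫ u in s..t, C.lam u * EFf u := by
      refine intervalIntegral.integral_nonneg hst fun u hu => ?_
      have hu' : u ∈ Set.Icc (0:ℝ) T := ⟨hs.1.trans hu.1, hu.2.trans ht.2.le⟩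
      exact mul_nonneg (C.lam_nonneg u hu') (hEFpos u).le
    linarith [hid]
  -- big values of A near T
  have hbig : ∀ N : ℝ, ∃ s1, 0 ≤ s1 ∧ s1 < T ∧ ∀ r ∈ Set.Ioo s1 T, N ≤ A r := by
    intro N
    have hev : ∀ᶠ r in 𝓝[<] T, N ≤ A r := hA.2.2.eventually (eventually_ge_atTop N)
    rw [Filter.eventually_iff, mem_nhdsLT_iff_exists_Ioo_subset] at hev
    obtain ⟨l, hl, hsub⟩ := hev
    exact ⟨max l 0, le_max_right _ _, max_lt hl hT,
      fun r hr => hsub ⟨(le_max_left l 0).trans_lt hr.1, hr.2⟩⟩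
  -- P2 : positivity
  have P2 : ∀ t ∈ Set.Ico (0:ℝ) T, 0 < alf t ∧ 0 < A t := by
    obtain ⟨s1, hs10, hs1T, hs1⟩ := hbig 1
    intro t ht
    have hmaxlt : max s1 t < T := max_lt hs1T ht.2
    set r := (max s1 t + T)/2 with hrdef
    have hr1 : max s1 t < r := by rw [hrdef]; linarith
    have hr2 : r < T := by rw [hrdef]; linarith
    have hAr : 1 ≤ A r := hs1 r ⟨(le_max_left s1 t).trans_lt hr1, hr2⟩
    have hr0 : 0 ≤ r := ht.1.trans ((le_max_right s1 t).trans hr1.le)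
    have halr : 0 < alf r := mul_pos (lt_of_lt_of_le one_pos hAr) (hEFpos r)
    have htr : t ≤ r := (le_max_right s1 t).trans hr1.le
    have halt : 0 < alf t := lt_of_lt_of_le halr (P1 t ht r ⟨hr0, hr2⟩ htr)
    refine ⟨halt, ?_⟩
    rcases mul_pos_iff.1 (half' t ▸ halt) with h | h
    · exact h.1
    · exact absurd (hEFpos t) (not_lt.2 h.2.le)
  -- P8 : uniform lower bound
  have P8 : ∃ m, 0 < m ∧ ∀ t ∈ Set.Ico (0:ℝ) T, m ≤ A t := by
    obtain ⟨s1, hs10, hs1T, hs1⟩ := hbig 1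
    set s2 := (s1 + T)/2 with hs2def
    have hs2a : s1 < s2 := by rw [hs2def]; linarith
    have hs2b : s2 < T := by rw [hs2def]; linarith
    have hs20 : (0:ℝ) ≤ s2 := hs10.trans hs2a.le
    have hsubset : Set.Icc (0:ℝ) s2 ⊆ Set.Ico 0 T :=
      fun x hx => ⟨hx.1, lt_of_le_of_lt hx.2 hs2b⟩
    obtain ⟨x0, hx0mem, hx0min⟩ :=
      isCompact_Icc.exists_isMinOn ⟨0, le_refl 0, hs20⟩ (hA.1.mono hsubset)
    refine ⟨min (A x0) 1, lt_min (P2 x0 (hsubset hx0mem)).2 one_pos, fun t ht => ?_⟩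
    rcases le_or_gt t s2 with h | h
    · exact (min_le_left _ _).trans (isMinOn_iff.mp hx0min t ⟨ht.1, h⟩)
    · exact (min_le_right _ _).trans (hs1 t ⟨hs2a.trans h, ht.2⟩)
  obtain ⟨m, hm0, hmA⟩ := P8
  have hIco0 : (0:ℝ) ∈ Set.Ico 0 T := ⟨le_refl 0, hT⟩
  have hal00 : 0 < alf 0 := (P2 0 hIco0).1
  have halmono0 : ∀ t ∈ Set.Ico (0:ℝ) T, alf t ≤ alf 0 :=
    fun t ht => P1 0 hIco0 t ht ht.1
  have hEFval : ∀ t ∈ Set.Ico (0:ℝ) T, EFf t = alf t / A t := by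
    intro t ht
    rw [half' t, mul_div_cancel_left₀ _ (ne_of_gt (P2 t ht).2)]
  have hEFbd : ∀ t ∈ Set.Ico (0:ℝ) T, EFf t ≤ alf 0 / m := by
    intro t ht
    rw [hEFval t ht]
    exact div_le_div₀ hal00.le (halmono0 t ht) hm0 (hmA t ht)
  -- P3 : EF tends to 0
  have P3 : Filter.Tendsto EFf (𝓝[<] T) (𝓝 0) := by
    have hconst : Filter.Tendsto (fun r => alf 0 / A r) (𝓝[<] T) (𝓝 0) :=
      Filter.Tendsto.div_atTop tendsto_const_nhds hA.2.2
    refine squeeze_zero' ?_ ?_ hconst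
    · exact Filter.Eventually.of_forall fun r => (hEFpos r).le
    · filter_upwards [Ioo_mem_nhdsLT_of_mem (⟨hT, le_refl T⟩ : T ∈ Set.Ioc 0 T)] with r hr
      have hrI : r ∈ Set.Ico (0:ℝ) T := ⟨hr.1.le, hr.2⟩
      rw [hEFval r hrI]
      exact div_le_div₀ hal00.le (halmono0 r hrI) (lt_of_lt_of_le hm0 (hmA r hrI))
        (le_refl (A r))
  -- P4 : integrability on Ioo 0 T
  have hgmeas : AEStronglyMeasurable (fun r => C.lam r * EFf r)
      (volume.restrict (Set.Ioo 0 T)) :=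
    (C.lam_meas.aestronglyMeasurable.restrict).mul
      ((hEFcont.mono Set.Ioo_subset_Ico_self).aestronglyMeasurable measurableSet_Ioo)
  have hgbd : ∀ r ∈ Set.Ioo (0:ℝ) T, |C.lam r * EFf r| ≤ Ml * (alf 0 / m) := by
    intro r hr
    have hrI : r ∈ Set.Ico (0:ℝ) T := ⟨hr.1.le, hr.2⟩
    rw [abs_mul, abs_of_pos (hEFpos r)]
    refine mul_le_mul ((hM0 r ⟨hr.1.le, hr.2.le⟩).trans (le_max_left _ _))
      (hEFbd r hrI) (hEFpos r).le hMl0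
  have P4 : IntegrableOn (fun r => C.lam r * EFf r) (Set.Ioo 0 T) := by
    refine Integrable.mono'
      (integrableOn_const (C := Ml * (alf 0 / m)) measure_Ioo_lt_top.ne)
      hgmeas ?_
    refine (MeasureTheory.ae_restrict_iff' measurableSet_Ioo).2
      (Filter.Eventually.of_forall fun r hr => ?_)
    rw [Real.norm_eq_abs]
    exact hgbd r hr
  -- interval integrability
  have hgii : ∀ s ∈ Set.Ico (0:ℝ) T, ∀ t ∈ Set.Ico (0:ℝ) T,
      IntervalIntegrable (fun r => C.lam r * EFf r) volume s t := by
    intro s hs t ht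
    have hbI : max s t < T := max_lt hs.2 ht.2
    have hsub1 : Set.Icc (0:ℝ) (max s t) ⊆ Set.Ico 0 T :=
      fun x hx => ⟨hx.1, lt_of_le_of_lt hx.2 hbI⟩
    have : IntegrableOn (fun r => C.lam r * EFf r) (Set.Icc 0 (max s t)) :=
      integrableOn_mul_cont
        (hlint.mono_set (Set.Icc_subset_Icc le_rfl hbI.le))
        (hEFcont.mono hsub1)
    rw [intervalIntegrable_iff]
    exact this.mono_set (Set.uIoc_subset_uIcc.trans
      (Set.uIcc_subset_Icc ⟨hs.1, le_max_left _ _⟩ ⟨ht.1, le_max_right _ _⟩))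
  -- identity from 0
  have hal0 : ∀ t ∈ Set.Ico (0:ℝ) T, alf t = alf 0 - ∫ u in (0:ℝ)..t, C.lam u * EFf u :=
    fun t ht => keyId t ht 0 ⟨le_refl 0, ht.1⟩ t ⟨ht.1, le_refl t⟩
  have halF0 : alf 0 = A 0 := by
    rw [half' 0, hEFf, EFx]
    simp
  -- split of the full integral
  have hsplit : ∀ t ∈ Set.Ioo (0:ℝ) T, (∫ r in Set.Ioo (0:ℝ) T, C.lam r * EFf r) =
      (∫ u in (0:ℝ)..t, C.lam u * EFf u) + ∫ r in Set.Ico t T, C.lam r * EFf r := by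
    intro t ht
    have hunion : Set.Ioo (0:ℝ) t ∪ Set.Ico t T = Set.Ioo 0 T := by
      ext x
      constructor
      · rintro (h | h)
        · exact ⟨h.1, h.2.trans ht.2⟩
        · exact ⟨lt_of_lt_of_le ht.1 h.1, h.2⟩
      · intro h
        rcases lt_or_ge x t with h' | h'
        · exact Or.inl ⟨h.1, h'⟩
        · exact Or.inr ⟨h', h.2⟩
    have hdisj : Disjoint (Set.Ioo (0:ℝ) t) (Set.Ico t T) := by
      rw [Set.disjoint_left]
      intro x hx hx2
      exact absurd hx.2 (not_lt.2 hx2.1)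
    rw [← hunion, MeasureTheory.setIntegral_union hdisj measurableSet_Ico
      (P4.mono_set (Set.Ioo_subset_Ioo le_rfl ht.2.le))
      (P4.mono_set (fun x hx => ⟨lt_of_lt_of_le ht.1 hx.1, hx.2⟩))]
    congr 1
    rw [intervalIntegral.integral_of_le ht.1.le, MeasureTheory.integral_Ioc_eq_integral_Ioo]
  -- P5 : convergence of alf
  set K := Ml * (alf 0 / m) with hKdef
  have hK0 : 0 ≤ K := mul_nonneg hMl0 (div_nonneg hal00.le hm0.le)
  have hbdabove : ∀ᶠ t in 𝓝[<] T, |alf t - aTFx T δ C A| ≤ K * (T - t) := by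
    filter_upwards [Ioo_mem_nhdsLT_of_mem (⟨hT, le_refl T⟩ : T ∈ Set.Ioc 0 T)] with t ht
    have htI : t ∈ Set.Ico (0:ℝ) T := ⟨ht.1.le, ht.2⟩
    have e1 := hal0 t htI
    have e2 := hsplit t ht
    have e3 : aTFx T δ C A = alf 0 - ((∫ u in (0:ℝ)..t, C.lam u * EFf u)
        + ∫ r in Set.Ico t T, C.lam r * EFf r) := by
      rw [aTFx, ← halF0, ← hEFf, ← e2]
    have e4 : alf t - aTFx T δ C A = ∫ r in Set.Ico t T, C.lam r * EFf r := by
      rw [e1, e3]; ring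
    rw [e4]
    have hptK : ∀ x ∈ Set.Ico t T, ‖C.lam x * EFf x‖ ≤ K := by
      intro x hx
      have hxI : x ∈ Set.Ioo (0:ℝ) T := ⟨lt_of_lt_of_le ht.1 hx.1, hx.2⟩
      rw [Real.norm_eq_abs]
      exact hgbd x hxI
    have hb := MeasureTheory.norm_setIntegral_le_of_norm_le_const
      (μ := volume) (s := Set.Ico t T) (f := fun r => C.lam r * EFf r) (C := K)
      (by rw [Real.volume_Ico]; exact ENNReal.ofReal_lt_top) hptK
    rw [measureReal_def, Real.volume_Ico, ENNReal.toReal_ofReal (by linarith [ht.2] : (0:ℝ) ≤ T - t)]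
      at hb
    rw [← Real.norm_eq_abs]
    exact hb
  have P5 : Filter.Tendsto alf (𝓝[<] T) (𝓝 (aTFx T δ C A)) := by
    have h0 : Filter.Tendsto (fun t => K * (T - t)) (𝓝[<] T) (𝓝 0) := by
      have hcont : Continuous (fun t : ℝ => K * (T - t)) :=
        continuous_const.mul (continuous_const.sub continuous_id)
      have h2 := hcont.tendsto T
      simp only [sub_self, mul_zero] at h2
      exact h2.mono_left nhdsWithin_le_nhds
    have hsq := squeeze_zero' (Filter.Eventually.of_forall fun t => abs_nonneg _)
      hbdabove h0
    rw [tendsto_iff_norm_sub_tendsto_zero]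
    simpa [Real.norm_eq_abs] using hsq
  -- P6 : positivity of the limit
  have P6 : 0 < aTFx T δ C A := by
    set N := 2 * Ml * T + 1 with hNdef
    have hN0 : 0 < N := by nlinarith
    obtain ⟨s2, hs20, hs2T, hs2⟩ := hbig N
    set s3 := (s2 + T)/2 with hs3def
    have hs3a : s2 < s3 := by rw [hs3def]; linarith
    have hs3b : s3 < T := by rw [hs3def]; linarith
    have hs30 : (0:ℝ) ≤ s3 := hs20.trans hs3a.le
    have hs3I : s3 ∈ Set.Ico (0:ℝ) T := ⟨hs30, hs3b⟩
    have hals3 : 0 < alf s3 := (P2 s3 hs3I).1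
    have hlow : ∀ᶠ t in 𝓝[<] T, alf s3 / 2 ≤ alf t := by
      filter_upwards [Ioo_mem_nhdsLT_of_mem (⟨hs3b, le_refl T⟩ : T ∈ Set.Ioc s3 T)]
        with t ht
      have htI : t ∈ Set.Ico (0:ℝ) T := ⟨hs30.trans ht.1.le, ht.2⟩
      have hid := keyId t htI s3 ⟨hs30, ht.1.le⟩ t ⟨htI.1, le_refl t⟩
      have hptbd : ∀ u ∈ Set.Icc s3 t, C.lam u * EFf u ≤ Ml * (alf s3 / N) := by
        intro u hu
        have huI : u ∈ Set.Ico (0:ℝ) T := ⟨hs30.trans hu.1, lt_of_le_of_lt hu.2 ht.2⟩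
        have hAu : N ≤ A u := hs2 u ⟨hs3a.trans_le hu.1, huI.2⟩
        have hEFu : EFf u ≤ alf s3 / N := by
          rw [hEFval u huI]
          exact div_le_div₀ hals3.le (P1 s3 hs3I u huI hu.1) hN0 hAu
        exact mul_le_mul (hMl u ⟨huI.1, huI.2.le⟩) hEFu (hEFpos u).le hMl0
      have hb : (∫ u in s3..t, C.lam u * EFf u) ≤ Ml * (alf s3 / N) * (t - s3) := by
        have hmono := intervalIntegral.integral_mono_on ht.1.le
          (hgii s3 hs3I t htI) intervalIntegrable_const hptbd
        rw [intervalIntegral.integral_const] at hmono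
        calc (∫ u in s3..t, C.lam u * EFf u) ≤ (t - s3) • (Ml * (alf s3 / N)) := hmono
          _ = Ml * (alf s3 / N) * (t - s3) := by rw [smul_eq_mul]; ring
      have hMlN : Ml * (alf s3 / N) * (t - s3) ≤ alf s3 / 2 := by
        have h1 : Ml * (alf s3 / N) * (t - s3) ≤ Ml * (alf s3 / N) * T := by
          refine mul_le_mul_of_nonneg_left (by linarith [ht.2, hs30]) ?_
          exact mul_nonneg hMl0 (div_nonneg hals3.le hN0.le)
        have h2 : Ml * (alf s3 / N) * T ≤ alf s3 / 2 := by
          have e : Ml * (alf s3 / N) * T = (alf s3 * (Ml * T)) / N := by ring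
          rw [e, div_le_div_iff₀ hN0 two_pos, hNdef]
          nlinarith [hals3.le, hMl0, hT.le]
        linarith
      linarith [hid, hb, hMlN]
    have := ge_of_tendsto P5 hlow
    linarith
  exact ⟨P1, fun t ht => (P2 t ht).2, ⟨m, hm0, hmA⟩, P3, P4, P5, P6⟩



lemma ric_int {T : ℝ} (δ : ℝ) (C : Coeffs T) {A : ℝ → ℝ}
    (hAc : ContinuousOn A (Set.Ico 0 T))
    {a b : ℝ} (hsub : Set.Icc a b ⊆ Set.Ico 0 T) :
    IntegrableOn (fun r => A r ^ 2 / C.eta r - δ * (C.kap r / C.eta r) * A r - C.lam r)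
      (Set.Icc a b) := by
  obtain ⟨hηc, hκc, hηne, hlint⟩ := coeff_facts C
  have h0T : Set.Icc a b ⊆ Set.Icc 0 T := fun x hx => ⟨(hsub hx).1, (hsub hx).2.le⟩
  have hcont : ContinuousOn (fun r => A r ^ 2 / C.eta r - δ * (C.kap r / C.eta r) * A r)
      (Set.Icc a b) := by
    refine ContinuousOn.sub ?_ ?_
    · exact ((hAc.mono hsub).pow 2).div (hηc.mono h0T) (fun x hx => hηne x (h0T hx))
    · exact (continuousOn_const.mul ((hκc.mono h0T).div (hηc.mono h0T)
        (fun x hx => hηne x (h0T hx)))).mul (hAc.mono hsub)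
  exact (hcont.integrableOn_compact isCompact_Icc).sub (hlint.mono_set h0T)

lemma exp_int_bound {a b : ℝ} (hab : a ≤ b) {w : ℝ → ℝ}
    (hw : ContinuousOn w (Set.Icc a b)) :
    (∫ u in a..b, w u * Real.exp (∫ x in a..u, -(w x))) ≤ 1 := by
  obtain ⟨formE, _⟩ := exp_form hab hw.neg
  have h := formE a ⟨le_refl a, hab⟩ b ⟨hab, le_refl b⟩
  rw [intervalIntegral.integral_same, Real.exp_zero] at h
  have hneg : (∫ u in a..b, -(w u) * Real.exp (∫ x in a..u, -(w x)))
      = -∫ u in a..b, w u * Real.exp (∫ x in a..u, -(w x)) := by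
    rw [← intervalIntegral.integral_neg]
    refine intervalIntegral.integral_congr fun u _ => ?_
    ring
  simp only [Pi.neg_apply] at h
  rw [hneg] at h
  have hpos := Real.exp_pos (∫ r in a..b, -(w r))
  linarith

lemma Dbound {T δ : ℝ} (hT : 0 < T) (C : Coeffs T) (hd0 : 0 ≤ δ)
    {A0 Ad : ℝ → ℝ} (hA0 : IsRiccatiSol T 0 C A0) (hAd : IsRiccatiSol T δ C Ad)
    {Mk : ℝ} (hMk : ∀ t ∈ Set.Icc (0:ℝ) T, C.kap t ≤ Mk) :
    ∀ t ∈ Set.Ico (0:ℝ) T, |Ad t - A0 t| ≤ δ * Mk := by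
  obtain ⟨mono0, pos0, -, EF0lim, -, -, -⟩ := main_aux hT C le_rfl hA0
  obtain ⟨monod, posd, -, EFdlim, -, -, -⟩ := main_aux hT C hd0 hAd
  obtain ⟨hηc, hκc, hηne, hlint⟩ := coeff_facts C
  have hMk0 : 0 ≤ Mk := (C.kap_nonneg 0 ⟨le_refl 0, hT.le⟩).trans (hMk 0 ⟨le_refl 0, hT.le⟩)
  intro t0 ht0
  set w : ℝ → ℝ := fun u => Ad u / C.eta u with hwdef
  set v : ℝ → ℝ := fun u => A0 u / C.eta u with hvdef
  set c : ℝ → ℝ := fun u => (Ad u + A0 u) / C.eta u with hcdef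
  set Eb : ℝ → ℝ := fun r => Real.exp (∫ x in t0..r, -(c x)) with hEbdef
  set D : ℝ → ℝ := fun r => Ad r - A0 r with hDdef
  set g : ℝ → ℝ := fun u => δ * (C.kap u / C.eta u) * Ad u with hgdef
  have hEbpos : ∀ r, 0 < Eb r := fun r => Real.exp_pos _
  -- continuity helpers on subintervals of [0,T)
  have hwc : ContinuousOn w (Set.Ico 0 T) :=
    (hAd.1.div (hηc.mono (fun x hx => ⟨hx.1, hx.2.le⟩))
      (fun x hx => hηne x ⟨hx.1, hx.2.le⟩))
  have hvc : ContinuousOn v (Set.Ico 0 T) :=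
    (hA0.1.div (hηc.mono (fun x hx => ⟨hx.1, hx.2.le⟩))
      (fun x hx => hηne x ⟨hx.1, hx.2.le⟩))
  have hcc : ContinuousOn c (Set.Ico 0 T) :=
    ((hAd.1.add hA0.1).div (hηc.mono (fun x hx => ⟨hx.1, hx.2.le⟩))
      (fun x hx => hηne x ⟨hx.1, hx.2.le⟩))
  have hgc : ContinuousOn g (Set.Ico 0 T) :=
    (continuousOn_const.mul ((hκc.mono (fun x hx => ⟨hx.1, hx.2.le⟩)).div
      (hηc.mono (fun x hx => ⟨hx.1, hx.2.le⟩))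
      (fun x hx => hηne x ⟨hx.1, hx.2.le⟩))).mul hAd.1
  -- Key identity
  have hkey : ∀ s ∈ Set.Ioo t0 T, D t0 = D s * Eb s + ∫ u in t0..s, g u * Eb u := by
    intro s hs
    have hsub : Set.Icc t0 s ⊆ Set.Ico 0 T :=
      fun x hx => ⟨ht0.1.trans hx.1, lt_of_le_of_lt hx.2 hs.2⟩
    have ht0s : t0 ≤ s := hs.1.le
    obtain ⟨formE, contE⟩ := exp_form ht0s ((hcc.mono hsub).neg)
    have hdcont : ContinuousOn (fun u => c u * D u - g u) (Set.Icc t0 s) :=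
      ((hcc.mono hsub).mul ((hAd.1.sub hA0.1).mono hsub)).sub (hgc.mono hsub)
    have hDform : ∀ p ∈ Set.Icc t0 s, ∀ q ∈ Set.Icc t0 s,
        D q = D p + ∫ u in p..q, (c u * D u - g u) := by
      intro p hp q hq
      have e1 := hAd.2.1 p (hsub hp) q (hsub hq)
      have e2 := hA0.2.1 p (hsub hp) q (hsub hq)
      have hii1 : IntervalIntegrable
          (fun r => Ad r ^ 2 / C.eta r - δ * (C.kap r / C.eta r) * Ad r - C.lam r)
          volume p q := by
        rw [intervalIntegrable_iff]
        exact (ric_int δ C hAd.1 hsub).mono_set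
          (Set.uIoc_subset_uIcc.trans (Set.uIcc_subset_Icc hp hq))
      have hii2 : IntervalIntegrable
          (fun r => A0 r ^ 2 / C.eta r - 0 * (C.kap r / C.eta r) * A0 r - C.lam r)
          volume p q := by
        rw [intervalIntegrable_iff]
        exact (ric_int 0 C hA0.1 hsub).mono_set
          (Set.uIoc_subset_uIcc.trans (Set.uIcc_subset_Icc hp hq))
      have e3 : D q = D p + ((∫ r in p..q,
            (Ad r ^ 2 / C.eta r - δ * (C.kap r / C.eta r) * Ad r - C.lam r))
          - ∫ r in p..q,
            (A0 r ^ 2 / C.eta r - 0 * (C.kap r / C.eta r) * A0 r - C.lam r)) := by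
        rw [hDdef]; dsimp only
        rw [e1, e2]; ring
      rw [e3, ← intervalIntegral.integral_sub hii1 hii2]
      congr 1
      refine intervalIntegral.integral_congr fun u _ => ?_
      rw [hcdef, hDdef, hgdef]
      dsimp only
      ring
    have hdint : IntegrableOn (fun u => c u * D u - g u) (Set.Icc t0 s) :=
      hdcont.integrableOn_compact isCompact_Icc
    have hgint2 : IntegrableOn (fun u => -(c u) * Eb u) (Set.Icc t0 s) :=
      (((hcc.mono hsub).neg).mul contE).integrableOn_compact isCompact_Icc
    have prodform := integralform_mul hdint hgint2
      ((hAd.1.sub hA0.1).mono hsub) contE hDform formE s ⟨ht0s, le_refl s⟩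
      t0 ⟨le_refl t0, ht0s⟩
    have prodform' : D t0 * Eb t0 = D s * Eb s
        + ∫ u in s..t0, ((c u * D u - g u) * Eb u + D u * (-(c u) * Eb u)) := prodform
    have hEb1 : Eb t0 = 1 := by
      rw [hEbdef]; dsimp only
      rw [intervalIntegral.integral_same, Real.exp_zero]
    rw [hEb1, mul_one] at prodform'
    have hcongr : (∫ u in s..t0, ((c u * D u - g u) * Eb u + D u * (-(c u) * Eb u)))
        = ∫ u in s..t0, -(g u * Eb u) := by
      refine intervalIntegral.integral_congr fun u _ => ?_
      ring
    rw [hcongr, intervalIntegral.integral_neg, intervalIntegral.integral_symm t0 s,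
      neg_neg] at prodform'
    exact prodform'
  -- bound on the integral term
  have hIbd : ∀ s ∈ Set.Ioo t0 T,
      (0 ≤ ∫ u in t0..s, g u * Eb u) ∧ (∫ u in t0..s, g u * Eb u) ≤ δ * Mk := by
    intro s hs
    have hsub : Set.Icc t0 s ⊆ Set.Ico 0 T :=
      fun x hx => ⟨ht0.1.trans hx.1, lt_of_le_of_lt hx.2 hs.2⟩
    have ht0s : t0 ≤ s := hs.1.le
    obtain ⟨-, contE⟩ := exp_form ht0s ((hcc.mono hsub).neg)
    have hgEc : ContinuousOn (fun u => g u * Eb u) (Set.Icc t0 s) :=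
      (hgc.mono hsub).mul contE
    have hgE_ii : IntervalIntegrable (fun u => g u * Eb u) volume t0 s :=
      ContinuousOn.intervalIntegrable (by rw [Set.uIcc_of_le ht0s]; exact hgEc)
    constructor
    · refine intervalIntegral.integral_nonneg ht0s fun u hu => ?_
      have huI : u ∈ Set.Ico (0:ℝ) T := hsub hu
      have huT : u ∈ Set.Icc (0:ℝ) T := ⟨huI.1, huI.2.le⟩
      refine mul_nonneg (mul_nonneg (mul_nonneg hd0 ?_) (posd u huI).le) (hEbpos u).le
      exact div_nonneg (C.kap_nonneg u huT) (C.eta_pos u huT).le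
    · have hpt : ∀ u ∈ Set.Icc t0 s, g u * Eb u
          ≤ δ * Mk * (w u * Real.exp (∫ x in t0..u, -(w x))) := by
        intro u hu
        have huI : u ∈ Set.Ico (0:ℝ) T := hsub hu
        have huT : u ∈ Set.Icc (0:ℝ) T := ⟨huI.1, huI.2.le⟩
        have hwu0 : 0 ≤ w u := div_nonneg (posd u huI).le (C.eta_pos u huT).le
        have hEb_le : Eb u ≤ Real.exp (∫ x in t0..u, -(w x)) := by
          have hsub2 : Set.Icc t0 u ⊆ Set.Ico 0 T :=
            fun x hx => hsub ⟨hx.1, hx.2.trans hu.2⟩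
          have hiiw : IntervalIntegrable (fun x => -(w x)) volume t0 u :=
            ContinuousOn.intervalIntegrable
              (by rw [Set.uIcc_of_le hu.1]; exact (hwc.mono hsub2).neg)
          have hiiv : IntervalIntegrable (fun x => -(v x)) volume t0 u :=
            ContinuousOn.intervalIntegrable
              (by rw [Set.uIcc_of_le hu.1]; exact (hvc.mono hsub2).neg)
          have hsplit : (∫ x in t0..u, -(c x))
              = (∫ x in t0..u, -(w x)) + ∫ x in t0..u, -(v x) := by
            rw [← intervalIntegral.integral_add hiiw hiiv]
            refine intervalIntegral.integral_congr fun x _ => ?_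
            rw [hcdef, hwdef, hvdef]
            dsimp only
            ring
          have hvneg : (∫ x in t0..u, -(v x)) ≤ 0 := by
            rw [intervalIntegral.integral_neg, neg_nonpos]
            refine intervalIntegral.integral_nonneg hu.1 fun x hx => ?_
            have hxI : x ∈ Set.Ico (0:ℝ) T := hsub ⟨hx.1, hx.2.trans hu.2⟩
            exact div_nonneg (pos0 x hxI).le (C.eta_pos x ⟨hxI.1, hxI.2.le⟩).le
          rw [hEbdef]; dsimp only
          rw [hsplit]
          exact Real.exp_le_exp.2 (by linarith)
        have hgu : g u ≤ δ * Mk * w u := by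
          rw [hgdef, hwdef]; dsimp only
          have h1 : C.kap u / C.eta u * Ad u ≤ Mk * (Ad u / C.eta u) := by
            rw [div_mul_eq_mul_div, mul_div_assoc]
            exact mul_le_mul_of_nonneg_right (hMk u huT)
              (div_nonneg (posd u huI).le (C.eta_pos u huT).le)
          calc δ * (C.kap u / C.eta u) * Ad u = δ * (C.kap u / C.eta u * Ad u) := by ring
            _ ≤ δ * (Mk * (Ad u / C.eta u)) := mul_le_mul_of_nonneg_left h1 hd0
            _ = δ * Mk * (Ad u / C.eta u) := by ring
        calc g u * Eb u ≤ (δ * Mk * w u) * Real.exp (∫ x in t0..u, -(w x)) :=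
              mul_le_mul hgu hEb_le (hEbpos u).le
                (mul_nonneg (mul_nonneg hd0 hMk0) hwu0)
          _ = δ * Mk * (w u * Real.exp (∫ x in t0..u, -(w x))) := by ring
      have hrhs_c : ContinuousOn
          (fun u => δ * Mk * (w u * Real.exp (∫ x in t0..u, -(w x)))) (Set.Icc t0 s) := by
        obtain ⟨-, contE2⟩ := exp_form ht0s ((hwc.mono hsub).neg)
        exact continuousOn_const.mul ((hwc.mono hsub).mul contE2)
      have hrhs_ii : IntervalIntegrable
          (fun u => δ * Mk * (w u * Real.exp (∫ x in t0..u, -(w x)))) volume t0 s :=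
        ContinuousOn.intervalIntegrable (by rw [Set.uIcc_of_le ht0s]; exact hrhs_c)
      have hmono := intervalIntegral.integral_mono_on ht0s hgE_ii hrhs_ii hpt
      have hpull : (∫ u in t0..s, δ * Mk * (w u * Real.exp (∫ x in t0..u, -(w x))))
          = δ * Mk * ∫ u in t0..s, w u * Real.exp (∫ x in t0..u, -(w x)) :=
        intervalIntegral.integral_const_mul _ _
      have hbd1 := exp_int_bound ht0s (hwc.mono hsub)
      calc (∫ u in t0..s, g u * Eb u)
          ≤ δ * Mk * ∫ u in t0..s, w u * Real.exp (∫ x in t0..u, -(w x)) := by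
            rw [← hpull]; exact hmono
        _ ≤ δ * Mk * 1 := mul_le_mul_of_nonneg_left hbd1 (mul_nonneg hd0 hMk0)
        _ = δ * Mk := mul_one _
  -- interval integrability helper
  have hii : ∀ (f : ℝ → ℝ), ContinuousOn f (Set.Ico 0 T) → ∀ p q : ℝ, 0 ≤ p → p ≤ q →
      q < T → IntervalIntegrable f volume p q := by
    intro f hf p q hp hpq hq
    refine ContinuousOn.intervalIntegrable ?_
    rw [Set.uIcc_of_le hpq]
    exact hf.mono (fun x hx => ⟨hp.trans hx.1, lt_of_le_of_lt hx.2 hq⟩)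
  set K1 : ℝ := ∫ x in (0:ℝ)..t0, w x with hK1def
  set K2 : ℝ := ∫ x in (0:ℝ)..t0, v x with hK2def
  set CC : ℝ := Real.exp (K1 + K2) with hCCdef
  have hCC0 : (0:ℝ) < CC := Real.exp_pos _
  have hIco0T : (0:ℝ) ∈ Set.Ico 0 T := ⟨le_refl 0, hT⟩
  have herr : ∀ s ∈ Set.Ioo t0 T, |D s * Eb s| ≤
      CC * (alFx T δ C Ad 0 * EFx T 0 C A0 s + alFx T 0 C A0 0 * EFx T δ C Ad s) := by
    intro s hs
    have hsI : s ∈ Set.Ico (0:ℝ) T := ⟨ht0.1.trans hs.1.le, hs.2⟩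
    have hiw1 := hii w hwc 0 t0 (le_refl 0) ht0.1 ht0.2
    have hiw2 := hii w hwc t0 s ht0.1 hs.1.le hs.2
    have hiv1 := hii v hvc 0 t0 (le_refl 0) ht0.1 ht0.2
    have hiv2 := hii v hvc t0 s ht0.1 hs.1.le hs.2
    have aw := intervalIntegral.integral_add_adjacent_intervals hiw1 hiw2
    have av := intervalIntegral.integral_add_adjacent_intervals hiv1 hiv2
    have hEbs : Eb s = CC * (Real.exp (-∫ x in (0:ℝ)..s, w x) *
        Real.exp (-∫ x in (0:ℝ)..s, v x)) := by
      rw [hEbdef]; dsimp only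
      have hiw2n : IntervalIntegrable (fun x => -(w x)) volume t0 s := hiw2.neg
      have hiv2n : IntervalIntegrable (fun x => -(v x)) volume t0 s := hiv2.neg
      have e : (∫ x in t0..s, -(c x)) = (∫ x in t0..s, -(w x)) + ∫ x in t0..s, -(v x) := by
        rw [← intervalIntegral.integral_add hiw2n hiv2n]
        refine intervalIntegral.integral_congr fun x _ => ?_
        rw [hcdef, hwdef, hvdef]; dsimp only; ring
      rw [e, hCCdef, ← Real.exp_add, ← Real.exp_add]
      congr 1
      rw [intervalIntegral.integral_neg, intervalIntegral.integral_neg]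
      linarith [aw, av]
    have hEF0 : EFx T 0 C A0 s = Real.exp (-∫ x in (0:ℝ)..s, v x) := by
      rw [EFx]
      congr 2
      refine intervalIntegral.integral_congr fun r _ => ?_
      rw [hvdef]; dsimp only; ring
    have hEFd_ge : Real.exp (-∫ x in (0:ℝ)..s, w x) ≤ EFx T δ C Ad s := by
      rw [EFx]
      have hq : ContinuousOn (fun r => δ * (C.kap r / C.eta r)) (Set.Ico 0 T) :=
        continuousOn_const.mul ((hκc.mono (fun x hx => ⟨hx.1, hx.2.le⟩)).div
          (hηc.mono (fun x hx => ⟨hx.1, hx.2.le⟩))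
          (fun x hx => hηne x ⟨hx.1, hx.2.le⟩))
      have hiq := hii _ hq 0 s (le_refl 0) hsI.1 hsI.2
      have hiws := hii w hwc 0 s (le_refl 0) hsI.1 hsI.2
      have hsplit : (∫ r in (0:ℝ)..s, (Ad r - δ * C.kap r) / C.eta r)
          = (∫ x in (0:ℝ)..s, w x) - ∫ r in (0:ℝ)..s, δ * (C.kap r / C.eta r) := by
        rw [← intervalIntegral.integral_sub hiws hiq]
        refine intervalIntegral.integral_congr fun r _ => ?_
        rw [hwdef]; dsimp only; ring
      have hq0 : 0 ≤ ∫ r in (0:ℝ)..s, δ * (C.kap r / C.eta r) := by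
        refine intervalIntegral.integral_nonneg hsI.1 fun x hx => ?_
        have hxT : x ∈ Set.Icc (0:ℝ) T := ⟨hx.1, hx.2.trans hsI.2.le⟩
        exact mul_nonneg hd0 (div_nonneg (C.kap_nonneg x hxT) (C.eta_pos x hxT).le)
      rw [hsplit]
      exact Real.exp_le_exp.2 (by linarith)
    have hDabs : |D s| ≤ Ad s + A0 s := by
      rw [hDdef]; dsimp only
      have h1 := (pos0 s hsI)
      have h2 := (posd s hsI)
      rw [abs_le]; constructor <;> linarith
    have halFd0 : alFx T δ C Ad s ≤ alFx T δ C Ad 0 := monod 0 hIco0T s hsI hsI.1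
    have halF0s : alFx T 0 C A0 s ≤ alFx T 0 C A0 0 := mono0 0 hIco0T s hsI hsI.1
    have halF00nn : 0 ≤ alFx T 0 C A0 0 :=
      mul_nonneg (pos0 0 hIco0T).le (Real.exp_pos _).le
    have hb1 : Ad s * Eb s ≤ CC * (alFx T δ C Ad 0 * EFx T 0 C A0 s) := by
      rw [hEbs, hEF0]
      have e1 : Ad s * (CC * (Real.exp (-∫ x in (0:ℝ)..s, w x) *
          Real.exp (-∫ x in (0:ℝ)..s, v x)))
          = CC * ((Ad s * Real.exp (-∫ x in (0:ℝ)..s, w x)) *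
            Real.exp (-∫ x in (0:ℝ)..s, v x)) := by ring
      rw [e1]
      refine mul_le_mul_of_nonneg_left ?_ hCC0.le
      refine mul_le_mul_of_nonneg_right ?_ (Real.exp_pos _).le
      calc Ad s * Real.exp (-∫ x in (0:ℝ)..s, w x)
          ≤ Ad s * EFx T δ C Ad s :=
            mul_le_mul_of_nonneg_left hEFd_ge (posd s hsI).le
        _ = alFx T δ C Ad s := rfl
        _ ≤ alFx T δ C Ad 0 := halFd0
    have hb2 : A0 s * Eb s ≤ CC * (alFx T 0 C A0 0 * EFx T δ C Ad s) := by
      rw [hEbs]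
      have e2 : A0 s * (CC * (Real.exp (-∫ x in (0:ℝ)..s, w x) *
          Real.exp (-∫ x in (0:ℝ)..s, v x)))
          = CC * ((A0 s * Real.exp (-∫ x in (0:ℝ)..s, v x)) *
            Real.exp (-∫ x in (0:ℝ)..s, w x)) := by ring
      rw [e2]
      refine mul_le_mul_of_nonneg_left ?_ hCC0.le
      have h1 : A0 s * Real.exp (-∫ x in (0:ℝ)..s, v x) ≤ alFx T 0 C A0 0 := by
        rw [← hEF0]
        calc A0 s * EFx T 0 C A0 s = alFx T 0 C A0 s := rfl
          _ ≤ alFx T 0 C A0 0 := halF0s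
      exact mul_le_mul h1 hEFd_ge (Real.exp_pos _).le halF00nn
    rw [abs_mul, abs_of_pos (hEbpos s)]
    calc |D s| * Eb s ≤ (Ad s + A0 s) * Eb s :=
          mul_le_mul_of_nonneg_right hDabs (hEbpos s).le
      _ = Ad s * Eb s + A0 s * Eb s := by ring
      _ ≤ CC * (alFx T δ C Ad 0 * EFx T 0 C A0 s)
          + CC * (alFx T 0 C A0 0 * EFx T δ C Ad s) := add_le_add hb1 hb2
      _ = CC * (alFx T δ C Ad 0 * EFx T 0 C A0 s
          + alFx T 0 C A0 0 * EFx T δ C Ad s) := by ring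
  -- the error term tends to zero, conclude
  have htb : Filter.Tendsto (fun s => CC * (alFx T δ C Ad 0 * EFx T 0 C A0 s
      + alFx T 0 C A0 0 * EFx T δ C Ad s)) (𝓝[<] T) (𝓝 0) := by
    have h1 := (EF0lim.const_mul (alFx T δ C Ad 0)).add
      (EFdlim.const_mul (alFx T 0 C A0 0))
    have h2 := h1.const_mul CC
    simpa using h2
  have hDEtend : Filter.Tendsto (fun s => |D s * Eb s|) (𝓝[<] T) (𝓝 0) := by
    refine squeeze_zero' (Filter.Eventually.of_forall fun s => abs_nonneg _) ?_ htb
    filter_upwards [Ioo_mem_nhdsLT_of_mem (⟨ht0.2, le_refl T⟩ : T ∈ Set.Ioc t0 T)]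
      with s hs
    exact herr s hs
  have hfinal : ∀ᶠ s in 𝓝[<] T, |D t0| ≤ |D s * Eb s| + δ * Mk := by
    filter_upwards [Ioo_mem_nhdsLT_of_mem (⟨ht0.2, le_refl T⟩ : T ∈ Set.Ioc t0 T)]
      with s hs
    have h1 := hkey s hs
    obtain ⟨hI0, hIb⟩ := hIbd s hs
    calc |D t0| = |D s * Eb s + ∫ u in t0..s, g u * Eb u| := by rw [h1]
      _ ≤ |D s * Eb s| + |∫ u in t0..s, g u * Eb u| := abs_add_le _ _
      _ ≤ |D s * Eb s| + δ * Mk := by rw [abs_of_nonneg hI0]; linarith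
  have hlim : Filter.Tendsto (fun s => |D s * Eb s| + δ * Mk) (𝓝[<] T)
      (𝓝 (0 + δ * Mk)) := hDEtend.add tendsto_const_nhds
  have hres := ge_of_tendsto hlim hfinal
  rw [zero_add] at hres
  exact hres



theorem final_tendsto {T : ℝ} (hT : 0 < T) (C : Coeffs T)
    (A : ℝ → ℝ → ℝ) (hA : ∀ δ ∈ Set.Icc (0:ℝ) 1, IsRiccatiSol T δ C (A δ)) :
    Filter.Tendsto (fun δ => aTFx T δ C (A δ)) (𝓝[Set.Icc 0 1] 0)
      (𝓝 (aTFx T 0 C (A 0))) := by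
  have h01 : (0:ℝ) ∈ Set.Icc (0:ℝ) 1 := ⟨le_refl 0, zero_le_one⟩
  have hA0 := hA 0 h01
  obtain ⟨hηc, hκc, hηne, hlint⟩ := coeff_facts C
  obtain ⟨mono0, pos0, ⟨m0, hm00, hm0A⟩, EF0lim, int0, -, -⟩ := main_aux hT C le_rfl hA0
  -- bounds for κ, η, λ
  obtain ⟨Mk, hMkn⟩ := isCompact_Icc.exists_bound_of_continuousOn hκc
  have hMk : ∀ t ∈ Set.Icc (0:ℝ) T, C.kap t ≤ Mk :=
    fun t ht => (le_abs_self _).trans (Real.norm_eq_abs _ ▸ hMkn t ht)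
  have hMk0 : 0 ≤ Mk := (C.kap_nonneg 0 ⟨le_refl 0, hT.le⟩).trans (hMk 0 ⟨le_refl 0, hT.le⟩)
  obtain ⟨x0, hx0mem, hx0min⟩ :=
    isCompact_Icc.exists_isMinOn ⟨0, ⟨le_refl 0, hT.le⟩⟩ hηc
  set me := C.eta x0 with hmedef
  have hme0 : 0 < me := C.eta_pos x0 hx0mem
  have hme : ∀ t ∈ Set.Icc (0:ℝ) T, me ≤ C.eta t := fun t ht => isMinOn_iff.mp hx0min t ht
  obtain ⟨M0, hM0⟩ := C.lam_bdd
  set Ml := max M0 0 with hMldef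
  have hMl0 : (0:ℝ) ≤ Ml := le_max_right _ _
  have hMlabs : ∀ t ∈ Set.Icc (0:ℝ) T, |C.lam t| ≤ Ml :=
    fun t ht => (hM0 t ht).trans (le_max_left _ _)
  set C1 := 2 * Mk * T / me with hC1def
  have hC10 : 0 ≤ C1 := div_nonneg (by positivity) hme0.le
  -- EF0 is bounded by 1
  have hEF01 : ∀ r ∈ Set.Ico (0:ℝ) T, EFx T 0 C (A 0) r ≤ 1 := by
    intro r hr
    rw [EFx, Real.exp_le_one_iff, neg_nonpos]
    refine intervalIntegral.integral_nonneg hr.1 fun x hx => ?_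
    have hxI : x ∈ Set.Ico (0:ℝ) T := ⟨hx.1, lt_of_le_of_lt hx.2 hr.2⟩
    have hxT : x ∈ Set.Icc (0:ℝ) T := ⟨hx.1, hx.2.trans hr.2.le⟩
    have := pos0 x hxI
    have := C.eta_pos x hxT
    have hnum : 0 ≤ A 0 x - 0 * C.kap x := by linarith
    exact div_nonneg hnum (C.eta_pos x hxT).le
  -- the main estimate
  have key : ∀ δ ∈ Set.Icc (0:ℝ) 1, δ * C1 ≤ 1 →
      |aTFx T δ C (A δ) - aTFx T 0 C (A 0)| ≤ (Mk + Ml * (2 * C1) * T) * δ := by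
    intro δ hδ hδC1
    have hAd := hA δ hδ
    obtain ⟨monod, posd, -, EFdlim, intd, -, -⟩ := main_aux hT C hδ.1 hAd
    have hDb := Dbound hT C hδ.1 hA0 hAd hMk
    -- pointwise bound on the difference of exponentials
    have hEdiff : ∀ r ∈ Set.Ioo (0:ℝ) T,
        |EFx T δ C (A δ) r - EFx T 0 C (A 0) r| ≤ 2 * (C1 * δ) := by
      intro r hr
      have hrI : r ∈ Set.Ico (0:ℝ) T := ⟨hr.1.le, hr.2⟩
      have hsub : Set.Icc (0:ℝ) r ⊆ Set.Ico 0 T :=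
        fun x hx => ⟨hx.1, lt_of_le_of_lt hx.2 hr.2⟩
      have hsubT : Set.Icc (0:ℝ) r ⊆ Set.Icc 0 T :=
        fun x hx => ⟨hx.1, hx.2.trans hr.2.le⟩
      have hiid : IntervalIntegrable (fun x => (A δ x - δ * C.kap x) / C.eta x) volume 0 r :=
        ContinuousOn.intervalIntegrable (by
          rw [Set.uIcc_of_le hr.1.le]
          exact ((hAd.1.mono hsub).sub
            (continuousOn_const.mul (hκc.mono hsubT))).div (hηc.mono hsubT)
            (fun x hx => hηne x (hsubT hx)))
      have hii0 : IntervalIntegrable (fun x => (A 0 x - 0 * C.kap x) / C.eta x) volume 0 r :=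
        ContinuousOn.intervalIntegrable (by
          rw [Set.uIcc_of_le hr.1.le]
          exact ((hA0.1.mono hsub).sub
            (continuousOn_const.mul (hκc.mono hsubT))).div (hηc.mono hsubT)
            (fun x hx => hηne x (hsubT hx)))
      set u : ℝ := (-∫ x in (0:ℝ)..r, (A δ x - δ * C.kap x) / C.eta x)
        - (-∫ x in (0:ℝ)..r, (A 0 x - 0 * C.kap x) / C.eta x) with hudef
      have hu : |u| ≤ C1 * δ := by
        have e1 : u = -∫ x in (0:ℝ)..r,
            ((A δ x - δ * C.kap x) / C.eta x - (A 0 x - 0 * C.kap x) / C.eta x) := by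
          rw [hudef, intervalIntegral.integral_sub hiid hii0]
          ring
        rw [e1, abs_neg]
        have habs : |∫ x in (0:ℝ)..r, ((A δ x - δ * C.kap x) / C.eta x
              - (A 0 x - 0 * C.kap x) / C.eta x)|
            ≤ ∫ x in (0:ℝ)..r, |(A δ x - δ * C.kap x) / C.eta x
              - (A 0 x - 0 * C.kap x) / C.eta x| :=
          intervalIntegral.abs_integral_le_integral_abs hr.1.le
        refine habs.trans ?_
        have hptw : ∀ x ∈ Set.Icc (0:ℝ) r,
            |(A δ x - δ * C.kap x) / C.eta x - (A 0 x - 0 * C.kap x) / C.eta x|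
            ≤ 2 * Mk * δ / me := by
          intro x hx
          have hxI := hsub hx
          have hxT := hsubT hx
          have he := C.eta_pos x hxT
          have e2 : (A δ x - δ * C.kap x) / C.eta x - (A 0 x - 0 * C.kap x) / C.eta x
              = (A δ x - A 0 x - δ * C.kap x) / C.eta x := by ring
          rw [e2, abs_div, abs_of_pos he]
          have hnum : |A δ x - A 0 x - δ * C.kap x| ≤ 2 * Mk * δ := by
            have h1 : |A δ x - A 0 x| ≤ δ * Mk := hDb x hxI
            have h2 : |δ * C.kap x| ≤ δ * Mk := by
              rw [abs_of_nonneg (mul_nonneg hδ.1 (C.kap_nonneg x hxT))]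
              exact mul_le_mul_of_nonneg_left (hMk x hxT) hδ.1
            calc |A δ x - A 0 x - δ * C.kap x|
                ≤ |A δ x - A 0 x| + |δ * C.kap x| := abs_sub _ _
              _ ≤ δ * Mk + δ * Mk := add_le_add h1 h2
              _ = 2 * Mk * δ := by ring
          exact div_le_div₀
            (mul_nonneg (mul_nonneg (by norm_num) hMk0) hδ.1) hnum hme0 (hme x hxT)
        have hiabs : IntervalIntegrable
            (fun x => |(A δ x - δ * C.kap x) / C.eta x - (A 0 x - 0 * C.kap x) / C.eta x|)
            volume 0 r := (hiid.sub hii0).abs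
        have hmono := intervalIntegral.integral_mono_on hr.1.le hiabs
          intervalIntegrable_const hptw
        rw [intervalIntegral.integral_const, smul_eq_mul, sub_zero] at hmono
        have hrT : r * (2 * Mk * δ / me) ≤ T * (2 * Mk * δ / me) :=
          mul_le_mul_of_nonneg_right hr.2.le
            (div_nonneg (mul_nonneg (mul_nonneg (by norm_num) hMk0) hδ.1) hme0.le)
        have heq : T * (2 * Mk * δ / me) = C1 * δ := by
          rw [hC1def]; ring
        linarith [hmono, hrT, heq.le, heq.ge]
      -- now compare the exponentials
      set y0 : ℝ := -∫ x in (0:ℝ)..r, (A 0 x - 0 * C.kap x) / C.eta x with hy0def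
      have hy0 : EFx T 0 C (A 0) r = Real.exp y0 := rfl
      have hxd : EFx T δ C (A δ) r = Real.exp (y0 + u) := by
        rw [EFx]
        congr 1
        rw [hudef]; ring
      have hu1 : |u| ≤ 1 := hu.trans (by rw [mul_comm]; exact hδC1)
      have hdiffeq : EFx T δ C (A δ) r - EFx T 0 C (A 0) r
          = Real.exp y0 * (Real.exp u - 1) := by
        rw [hxd, hy0, Real.exp_add]; ring
      rw [hdiffeq, abs_mul, abs_of_pos (Real.exp_pos _)]
      have h2u : |Real.exp u - 1| ≤ 2 * |u| := Real.abs_exp_sub_one_le hu1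
      calc Real.exp y0 * |Real.exp u - 1| ≤ 1 * (2 * |u|) := by
            refine mul_le_mul ?_ h2u (abs_nonneg _) one_pos.le
            rw [← hy0]; exact hEF01 r hrI
        _ = 2 * |u| := one_mul _
        _ ≤ 2 * (C1 * δ) := by linarith [hu]
    -- difference of the integral terms
    have hL : |(∫ r in Set.Ioo (0:ℝ) T, C.lam r * EFx T δ C (A δ) r)
        - ∫ r in Set.Ioo (0:ℝ) T, C.lam r * EFx T 0 C (A 0) r| ≤ Ml * (2 * (C1 * δ)) * T := by
      rw [← MeasureTheory.integral_sub intd int0]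
      have hpt : ∀ x ∈ Set.Ioo (0:ℝ) T,
          ‖C.lam x * EFx T δ C (A δ) x - C.lam x * EFx T 0 C (A 0) x‖
          ≤ Ml * (2 * (C1 * δ)) := by
        intro x hx
        have hxT : x ∈ Set.Icc (0:ℝ) T := ⟨hx.1.le, hx.2.le⟩
        have e : C.lam x * EFx T δ C (A δ) x - C.lam x * EFx T 0 C (A 0) x
            = C.lam x * (EFx T δ C (A δ) x - EFx T 0 C (A 0) x) := by ring
        rw [Real.norm_eq_abs, e, abs_mul]
        exact mul_le_mul (hMlabs x hxT) (hEdiff x hx) (abs_nonneg _) hMl0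
      have hb := MeasureTheory.norm_setIntegral_le_of_norm_le_const
        (μ := volume) (s := Set.Ioo (0:ℝ) T)
        (f := fun x => C.lam x * EFx T δ C (A δ) x - C.lam x * EFx T 0 C (A 0) x)
        (C := Ml * (2 * (C1 * δ)))
        (by rw [Real.volume_Ioo]; exact ENNReal.ofReal_lt_top) hpt
      rw [measureReal_def, Real.volume_Ioo, ENNReal.toReal_ofReal (by linarith : (0:ℝ) ≤ T - 0),
        sub_zero, Real.norm_eq_abs] at hb
      exact hb
    -- conclude
    have hD0 : |A δ 0 - A 0 0| ≤ δ * Mk := hDb 0 ⟨le_refl 0, hT⟩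
    have e : aTFx T δ C (A δ) - aTFx T 0 C (A 0)
        = (A δ 0 - A 0 0) - ((∫ r in Set.Ioo (0:ℝ) T, C.lam r * EFx T δ C (A δ) r)
          - ∫ r in Set.Ioo (0:ℝ) T, C.lam r * EFx T 0 C (A 0) r) := by
      rw [aTFx, aTFx]; ring
    rw [e]
    calc |(A δ 0 - A 0 0) - ((∫ r in Set.Ioo (0:ℝ) T, C.lam r * EFx T δ C (A δ) r)
          - ∫ r in Set.Ioo (0:ℝ) T, C.lam r * EFx T 0 C (A 0) r)|
        ≤ |A δ 0 - A 0 0| + |(∫ r in Set.Ioo (0:ℝ) T, C.lam r * EFx T δ C (A δ) r)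
          - ∫ r in Set.Ioo (0:ℝ) T, C.lam r * EFx T 0 C (A 0) r| := abs_sub _ _
      _ ≤ δ * Mk + Ml * (2 * (C1 * δ)) * T := add_le_add hD0 hL
      _ = (Mk + Ml * (2 * C1) * T) * δ := by ring
  -- final squeeze
  set Cst := Mk + Ml * (2 * C1) * T with hCstdef
  have hev : ∀ᶠ δ' in 𝓝[Set.Icc (0:ℝ) 1] 0,
      |aTFx T δ' C (A δ') - aTFx T 0 C (A 0)| ≤ Cst * δ' := by
    have h1 : Set.Iio (1/(C1+1)) ∈ 𝓝[Set.Icc (0:ℝ) 1] (0:ℝ) :=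
      nhdsWithin_le_nhds (Iio_mem_nhds (by positivity))
    filter_upwards [self_mem_nhdsWithin, h1] with δ' hδ' hlt
    have hd0 : (0:ℝ) ≤ δ' := hδ'.1
    have hC1p : (0:ℝ) < C1 + 1 := by linarith
    have h2 : δ' * (C1 + 1) < 1 := (lt_div_iff₀ hC1p).1 hlt
    have h3 : δ' * C1 ≤ 1 := by nlinarith
    have := key δ' hδ' h3
    calc |aTFx T δ' C (A δ') - aTFx T 0 C (A 0)| ≤ (Mk + Ml * (2 * C1) * T) * δ' := this
      _ = Cst * δ' := by rw [hCstdef]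
  have htc : Filter.Tendsto (fun δ' : ℝ => Cst * δ') (𝓝[Set.Icc (0:ℝ) 1] 0) (𝓝 0) := by
    have hc : Continuous (fun δ' : ℝ => Cst * δ') := continuous_const.mul continuous_id
    have := hc.tendsto 0
    rw [mul_zero] at this
    exact this.mono_left nhdsWithin_le_nhds
  have h1 := squeeze_zero' (Filter.Eventually.of_forall fun t => abs_nonneg _) hev htc
  rw [tendsto_iff_norm_sub_tendsto_zero]
  simpa [Real.norm_eq_abs] using h1


end Stmt3Aux

/-- For every `δ ∈ [0,1]` the map
`t ↦ α^δ_t := A^δ_t · exp(-∫_0^t (A^δ_r - δκ_r)/η_r dr)` is non-increasing on `[0,T)`, the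
limit `α^δ_T := lim_{t↗T} α^δ_t` exists and lies in `(0,∞)`, and `lim_{δ→0} α^δ_T = α⁰_T`. -/
theorem stmt_3 (T : ℝ) (hT : 0 < T) (C : Coeffs T)
    (A : ℝ → ℝ → ℝ) (hA : ∀ δ ∈ Set.Icc (0:ℝ) 1, IsRiccatiSol T δ C (A δ)) :
    (∀ δ ∈ Set.Icc (0:ℝ) 1, ∀ s ∈ Set.Ico (0:ℝ) T, ∀ t ∈ Set.Ico (0:ℝ) T, s ≤ t →
      A δ t * Real.exp (-∫ r in (0:ℝ)..t, (A δ r - δ * C.kap r) / C.eta r) ≤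
        A δ s * Real.exp (-∫ r in (0:ℝ)..s, (A δ r - δ * C.kap r) / C.eta r)) ∧
    (∃ αT : ℝ → ℝ,
      (∀ δ ∈ Set.Icc (0:ℝ) 1, 0 < αT δ ∧
        Filter.Tendsto
          (fun t => A δ t * Real.exp (-∫ r in (0:ℝ)..t, (A δ r - δ * C.kap r) / C.eta r))
          (nhdsWithin T (Set.Iio T)) (nhds (αT δ))) ∧
      Filter.Tendsto αT (nhdsWithin 0 (Set.Icc 0 1)) (nhds (αT 0))) := by
  constructor
  · intro δ hδ s hs t ht hst
    exact (Stmt3Aux.main_aux hT C hδ.1 (hA δ hδ)).1 s hs t ht hst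
  · refine ⟨fun δ => Stmt3Aux.aTFx T δ C (A δ), fun δ hδ => ?_, ?_⟩
    · obtain ⟨-, -, -, -, -, P5, P6⟩ := Stmt3Aux.main_aux hT C hδ.1 (hA δ hδ)
      exact ⟨P6, P5⟩
    · exact Stmt3Aux.final_tendsto hT C A hA

end
end

section
/- Let δ ∈ [0,1], x ∈ ℝ and μ ∈ L¹([0,T]), and let X be defined by X_t := [ x·exp(−∫_0^t (A^δ_r − δκ_r)/η_r dr) − ∫_0^t (1/η_s)·exp(−∫_s^t (A^δ_r − δκ_r)/η_r dr)·(∫_s^{τ_μ(x)} κ_u·μ_u·exp(−∫_s^u A^δ_r/η_r dr) du) ds ]·1_{{t ≤ τ_μ(x)}}. If τ_μ(x) = T, then lim_{t↗T} X_t = 0. -/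
open MeasureTheory intervalIntegral Set Filter Topology

noncomputable section

private lemma exists_lower_seg {T : ℝ} (hT : 0 < T) {A : ℝ → ℝ}
    (h : Tendsto A (𝓝[<] T) atTop) (M : ℝ) :
    ∃ t₀, 0 ≤ t₀ ∧ t₀ < T ∧ ∀ r, t₀ ≤ r → r < T → M ≤ A r := by
  have hev : {r | M ≤ A r} ∈ 𝓝[<] T := h.eventually (eventually_ge_atTop M)
  rw [mem_nhdsLT_iff_exists_Ioo_subset] at hev
  obtain ⟨l, hl, hsub⟩ := hev
  have hlT : l < T := hl
  refine ⟨max ((l + T) / 2) 0, le_max_right _ _, max_lt (by linarith) hT, ?_⟩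
  intro r hr hrT
  exact hsub ⟨lt_of_lt_of_le (by linarith) (le_trans (le_max_left _ _) hr), hrT⟩

private lemma continuousOn_primitive_Ico {T : ℝ} {f : ℝ → ℝ}
    (hf : ∀ b, 0 ≤ b → b < T → IntervalIntegrable f volume 0 b) :
    ContinuousOn (fun t => ∫ r in (0:ℝ)..t, f r) (Ico 0 T) := by
  intro t ht
  obtain ⟨b, hb1, hb2⟩ := exists_between ht.2
  have h0b : (0:ℝ) ≤ b := le_trans ht.1 hb1.le
  have hc : ContinuousOn (fun t => ∫ r in (0:ℝ)..t, f r) (Icc 0 b) := by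
    have h1 := intervalIntegral.continuousOn_primitive_interval (μ := volume) (a := 0) (b := b)
      (f := f) ?_
    · simpa [uIcc_of_le h0b] using h1
    · rw [uIcc_of_le h0b]
      exact (intervalIntegrable_iff_integrableOn_Icc_of_le h0b).mp (hf b h0b hb2)
  refine (hc t ⟨ht.1, hb1.le⟩).mono_of_mem_nhdsWithin ?_
  rw [mem_nhdsWithin]
  exact ⟨Iio b, isOpen_Iio, hb1, fun x hx => ⟨hx.2.1, hx.1.le⟩⟩


private lemma blowup_lower {T c s₀ : ℝ} (hc : 0 < c) {A : ℝ → ℝ} (hs₀T : s₀ < T)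
    (hcont : ContinuousOn A (Ico s₀ T))
    (hpos : ∀ r, s₀ ≤ r → r < T → 1 ≤ A r)
    (hint : ∀ s, s₀ ≤ s → s < T → ∀ t, s₀ ≤ t → t < T → s ≤ t →
      A t - A s ≤ c * ∫ r in s..t, (A r) ^ 2)
    (htend : Tendsto A (𝓝[<] T) atTop) :
    ∀ s, s₀ ≤ s → s < T → 1 ≤ c * A s * (T - s) := by
  intro s hs0 hsT
  by_contra hltc
  push_neg at hltc
  have hA1 : 1 ≤ A s := hpos s hs0 hsT
  have hTs : 0 < T - s := by linarith
  set q : ℝ := c * A s * (T - s) with hq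
  have hq0 : 0 < q := by positivity
  set ε : ℝ := (1 - q) / (c * (T - s) * 2) with hε
  have hεpos : 0 < ε := by
    apply div_pos (by linarith) (by positivity)
  set a : ℝ := A s + ε with ha
  have ha0 : 0 < a := by positivity
  have haq : c * a * (T - s) = q + (1 - q) / 2 := by
    rw [ha, hε, hq]; field_simp
  have ha1 : c * a * (T - s) < 1 := by rw [haq]; linarith
  set ρ : ℝ := 1 - c * a * (T - s) with hρ
  have hρ0 : 0 < ρ := by linarith
  set d : ℝ → ℝ := fun t => 1 - c * a * (t - s) with hd
  have hdlow : ∀ t, t ≤ T → ρ ≤ d t := by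
    intro t htT
    have : c * a * (t - s) ≤ c * a * (T - s) := by
      apply mul_le_mul_of_nonneg_left (by linarith) (by positivity)
    simp only [hd, hρ]; linarith
  set y : ℝ → ℝ := fun t => a / d t with hy
  have hdpos : ∀ t, t ≤ T → 0 < d t := fun t ht => lt_of_lt_of_le hρ0 (hdlow t ht)
  have hypos : ∀ t, t ≤ T → 0 < y t := fun t ht => div_pos ha0 (hdpos t ht)
  have hyderiv : ∀ t, t ≤ T → HasDerivAt y (c * (y t) ^ 2) t := by
    intro t htT
    have hdd : HasDerivAt d (-(c * a)) t := by
      have h := (((hasDerivAt_id t).sub_const s).const_mul (c * a)).neg.const_add 1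
      have e : (fun t => 1 - c * a * (t - s)) = (fun x => 1 + (-fun y => c * a * (id y - s)) x) := by
        ext x; simp only [id, Pi.neg_apply]; ring
      rw [hd, e]
      exact h.congr_deriv (by ring)
    have hdne : d t ≠ 0 := ne_of_gt (hdpos t htT)
    have h1 : HasDerivAt (fun t => (d t)⁻¹) (-(-(c * a)) / (d t) ^ 2) t := hdd.inv hdne
    have h2 : HasDerivAt y (a * (-(-(c * a)) / (d t) ^ 2)) t := h1.const_mul a
    convert h2 using 1
    rw [hy]
    field_simp
  have hycont : ContinuousOn y (Iic T) :=
    fun t ht => ((hyderiv t ht).continuousAt).continuousWithinAt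
  -- main claim : A t < y t on [s, T)
  have hylt : ∀ t₁, s ≤ t₁ → t₁ < T → A t₁ < y t₁ := by
    intro t₁ hst₁ ht₁T
    by_contra hge
    push_neg at hge  -- y t₁ ≤ A t₁
    set S : Set ℝ := {t ∈ Icc s t₁ | y t ≤ A t} with hS
    have hIccsub : Icc s t₁ ⊆ Ico s₀ T := fun r hr => ⟨le_trans hs0 hr.1, lt_of_le_of_lt hr.2 ht₁T⟩
    have hSne : S.Nonempty := ⟨t₁, ⟨⟨hst₁, le_refl _⟩, hge⟩⟩
    have hSclosed : IsClosed S := by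
      have : S = Icc s t₁ ∩ (fun t => A t - y t) ⁻¹' (Ici 0) := by
        ext r; simp [hS, and_comm, sub_nonneg]
      rw [this]
      exact ContinuousOn.preimage_isClosed_of_isClosed
        ((hcont.mono hIccsub).sub (hycont.mono (fun r hr => le_trans hr.2 ht₁T.le))) isClosed_Icc isClosed_Ici
    have hSbdd : BddBelow S := ⟨s, fun r hr => hr.1.1⟩
    set t' : ℝ := sInf S with ht'
    have ht'S : t' ∈ S := hSclosed.csInf_mem hSne hSbdd
    have hst' : s ≤ t' := ht'S.1.1
    have ht'T : t' < T := lt_of_le_of_lt ht'S.1.2 ht₁T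
    have hys : y s = a := by
      simp [hy, hd]
    rcases eq_or_lt_of_le hst' with heq | hlt
    · -- t' = s : contradiction since y s = a > A s
      have := ht'S.2
      rw [← heq] at this
      rw [hys] at this
      simp only [ha] at this
      linarith
    · -- s < t'
      have hbefore : ∀ r, s ≤ r → r < t' → A r < y r := by
        intro r hsr hrt'
        by_contra hge2
        push_neg at hge2
        have : r ∈ S := ⟨⟨hsr, le_trans hrt'.le ht'S.1.2⟩, hge2⟩
        exact absurd (csInf_le hSbdd this) (not_le.mpr hrt')
      have hmono : (fun r => (A r) ^ 2) ≤ᵐ[volume.restrict (Icc s t')]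
          fun r => (y r) ^ 2 := by
        rw [← Measure.restrict_congr_set Ico_ae_eq_Icc]
        refine (ae_restrict_iff' measurableSet_Ico).mpr (ae_of_all _ ?_)
        intro r hr
        have h1 : A r < y r := hbefore r hr.1 hr.2
        have h0 : 0 ≤ A r := le_trans zero_le_one
          (hpos r (le_trans hs0 hr.1) (lt_trans (lt_of_lt_of_le hr.2 ht'S.1.2) ht₁T))
        exact pow_le_pow_left₀ h0 h1.le 2
      have hsub2 : uIcc s t' ⊆ Ico s₀ T := by
        rw [uIcc_of_le hst']
        exact fun r hr => hIccsub ⟨hr.1, le_trans hr.2 ht'S.1.2⟩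
      have hsub3 : uIcc s t' ⊆ Iic T := fun r hr => le_trans (hsub2 hr).2.le le_rfl
      have hAint : IntervalIntegrable (fun r => (A r) ^ 2) volume s t' :=
        ((hcont.mono hsub2).pow 2).intervalIntegrable
      have hyint : IntervalIntegrable (fun r => (y r) ^ 2) volume s t' :=
        ((hycont.mono hsub3).pow 2).intervalIntegrable
      have hmono2 : (∫ r in s..t', (A r) ^ 2) ≤ ∫ r in s..t', (y r) ^ 2 :=
        intervalIntegral.integral_mono_ae_restrict hst' hAint hyint hmono
      have hftc : (∫ r in s..t', c * (y r) ^ 2) = y t' - y s := by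
        apply intervalIntegral.integral_eq_sub_of_hasDerivAt
        · intro r hr
          rw [uIcc_of_le hst'] at hr
          exact hyderiv r (le_trans hr.2 ht'T.le)
        · exact (continuousOn_const.mul ((hycont.mono hsub3).pow 2)).intervalIntegrable
      have hchain : A t' - A s ≤ c * ∫ r in s..t', (A r) ^ 2 :=
        hint s hs0 hsT t' (le_trans hs0 hst') ht'T hst'
      have : A t' - A s ≤ y t' - y s := by
        rw [← hftc]
        calc A t' - A s ≤ c * ∫ r in s..t', (A r) ^ 2 := hchain
          _ ≤ c * ∫ r in s..t', (y r) ^ 2 := by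
              apply mul_le_mul_of_nonneg_left hmono2 hc.le
          _ = ∫ r in s..t', c * (y r) ^ 2 := (intervalIntegral.integral_const_mul _ _).symm
      have hyt' : y t' ≤ A t' := ht'S.2
      rw [hys] at this
      simp only [ha] at this
      linarith
  -- now contradict tendsto atTop
  have hub : ∀ t₁, s ≤ t₁ → t₁ < T → A t₁ < a / ρ := by
    intro t₁ h1 h2
    refine lt_of_lt_of_le (hylt t₁ h1 h2) ?_
    rw [hy]
    exact div_le_div_of_nonneg_left ha0.le hρ0 (hdlow t₁ h2.le)
  have hev := (htend.eventually (eventually_ge_atTop (a / ρ))).and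
    (eventually_of_mem (Ioo_mem_nhdsLT hsT) (fun r hr => hr))
  obtain ⟨r, hr1, hr2⟩ := hev.exists
  exact absurd (hub r hr2.1.le hr2.2) (not_lt.mpr hr1)


private lemma key_limit {T : ℝ} (hT : 0 < T) {gE Φ : ℝ → ℝ} {C : ℝ} (hC : 0 ≤ C)
    (hgEtop : Tendsto gE (𝓝[<] T) atTop)
    (hgEc : ContinuousOn gE (Ico 0 T))
    (hΦc : ContinuousOn Φ (Ico 0 T))
    (hbound : ∀ s, 0 ≤ s → s < T → |Φ s| ≤ C * Real.exp (gE s))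
    (hslope : ∀ N : ℝ, ∃ t₀, 0 ≤ t₀ ∧ t₀ < T ∧
      ∀ s t, t₀ ≤ s → s ≤ t → t < T → N * (t - s) ≤ gE t - gE s) :
    Tendsto (fun t => Real.exp (-gE t) * ∫ s in (0:ℝ)..t, Φ s) (𝓝[<] T) (𝓝 0) := by
  rw [Metric.tendsto_nhds]
  intro ε hε
  set N : ℝ := 2 * C / ε + 1 with hN
  have hN0 : 0 < N := by positivity
  have hCN : C / N < ε / 2 := by
    rw [div_lt_iff₀ hN0, hN]
    have : (2 * C / ε) * ε = 2 * C := by field_simp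
    nlinarith
  obtain ⟨t₀, ht₀0, ht₀T, hslp⟩ := hslope N
  have hIccsub : ∀ b, 0 ≤ b → b < T → Icc 0 b ⊆ Ico 0 T :=
    fun b h0 hb r hr => ⟨hr.1, lt_of_le_of_lt hr.2 hb⟩
  have hΦi : ∀ a b, 0 ≤ a → 0 ≤ b → a < T → b < T → IntervalIntegrable Φ volume a b := by
    intro a b h1 h2 h3 h4
    apply (hΦc.mono ?_).intervalIntegrable
    intro r hr
    rcases le_total a b with h | h
    · rw [uIcc_of_le h] at hr; exact ⟨le_trans h1 hr.1, lt_of_le_of_lt hr.2 h4⟩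
    · rw [uIcc_of_ge h] at hr; exact ⟨le_trans h2 hr.1, lt_of_le_of_lt hr.2 h3⟩
  set CA : ℝ := |∫ s in (0:ℝ)..t₀, Φ s| with hCA
  have hexp0 : Tendsto (fun t => Real.exp (-gE t)) (𝓝[<] T) (𝓝 0) :=
    Real.tendsto_exp_atBot.comp (tendsto_neg_atTop_atBot.comp hgEtop)
  have hA : Tendsto (fun t => Real.exp (-gE t) * CA) (𝓝[<] T) (𝓝 0) := by
    simpa using hexp0.mul_const CA
  have hev1 : ∀ᶠ t in 𝓝[<] T, Real.exp (-gE t) * CA < ε / 2 := by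
    have hmem : Iio (ε / 2) ∈ 𝓝 (0:ℝ) := Iio_mem_nhds (by positivity)
    exact hA hmem
  have hev2 : Ioo t₀ T ∈ 𝓝[<] T := Ioo_mem_nhdsLT ht₀T
  filter_upwards [hev1, eventually_of_mem hev2 (fun r hr => hr)] with t hta htb
  obtain ⟨htt₀, htT⟩ := htb
  have ht0 : 0 ≤ t := le_trans ht₀0 htt₀.le
  rw [Real.dist_eq, sub_zero]
  -- split the integral
  have hsplit : (∫ s in (0:ℝ)..t, Φ s) =
      (∫ s in (0:ℝ)..t₀, Φ s) + ∫ s in t₀..t, Φ s :=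
    (intervalIntegral.integral_add_adjacent_intervals
      (hΦi 0 t₀ le_rfl ht₀0 hT ht₀T) (hΦi t₀ t ht₀0 ht0 ht₀T htT)).symm
  -- bound the tail integral
  have hgEexp_cont : ContinuousOn (fun s => C * Real.exp (gE s)) (Ico 0 T) :=
    continuousOn_const.mul (Real.continuous_exp.comp_continuousOn hgEc)
  have hsubt : uIcc t₀ t ⊆ Ico 0 T := by
    rw [uIcc_of_le htt₀.le]
    exact fun r hr => ⟨le_trans ht₀0 hr.1, lt_of_le_of_lt hr.2 htT⟩
  have htail1 : ‖∫ s in t₀..t, Φ s‖ ≤ |∫ s in t₀..t, C * Real.exp (gE s)| := by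
    apply intervalIntegral.norm_integral_le_abs_of_norm_le
    · refine (ae_restrict_iff' measurableSet_uIoc).mpr (ae_of_all _ ?_)
      intro s hs
      rw [uIoc_of_le htt₀.le] at hs
      exact hbound s (le_trans ht₀0 hs.1.le) (lt_of_le_of_lt hs.2 htT)
    · exact (hgEexp_cont.mono hsubt).intervalIntegrable
  have htail2 : (∫ s in t₀..t, C * Real.exp (gE s)) ≤
      ∫ s in t₀..t, C * (Real.exp (gE t) * Real.exp (N * (s - t))) := by
    apply intervalIntegral.integral_mono_on htt₀.le
    · exact (hgEexp_cont.mono hsubt).intervalIntegrable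
    · exact (continuous_const.mul (continuous_const.mul (Real.continuous_exp.comp
        (continuous_const.mul (continuous_id.sub continuous_const))))).intervalIntegrable _ _
    · intro s hs
      have hgs : gE s ≤ gE t - N * (t - s) := by
        have := hslp s t hs.1 hs.2 htT
        linarith
      have : Real.exp (gE s) ≤ Real.exp (gE t) * Real.exp (N * (s - t)) := by
        rw [← Real.exp_add]
        apply Real.exp_le_exp.mpr
        linarith
      exact mul_le_mul_of_nonneg_left this hC
  have hftc : (∫ s in t₀..t, Real.exp (N * (s - t))) =
      Real.exp (N * (t - t)) / N - Real.exp (N * (t₀ - t)) / N := by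
    apply intervalIntegral.integral_eq_sub_of_hasDerivAt (f := fun s => Real.exp (N * (s - t)) / N)
    · intro s hs
      have h1 : HasDerivAt (fun s => Real.exp (N * (s - t)) / N)
          (Real.exp (N * (s - t)) * (N * 1) / N) s :=
        ((((hasDerivAt_id s).sub_const t).const_mul N).exp).div_const N
      exact h1.congr_deriv (by rw [mul_one, mul_div_assoc, div_self hN0.ne', mul_one])
    · exact (Real.continuous_exp.comp
        (continuous_const.mul (continuous_id.sub continuous_const))).intervalIntegrable _ _
  have htail3 : (∫ s in t₀..t, C * (Real.exp (gE t) * Real.exp (N * (s - t)))) ≤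
      C * Real.exp (gE t) / N := by
    rw [intervalIntegral.integral_const_mul, intervalIntegral.integral_const_mul, hftc]
    have h1 : Real.exp (N * (t - t)) = 1 := by simp
    rw [h1]
    have h2 : 0 < Real.exp (N * (t₀ - t)) := Real.exp_pos _
    have h3 : 1 / N - Real.exp (N * (t₀ - t)) / N ≤ 1 / N := by
      have : 0 ≤ Real.exp (N * (t₀ - t)) / N := by positivity
      linarith
    calc C * (Real.exp (gE t) * (1 / N - Real.exp (N * (t₀ - t)) / N))
        ≤ C * (Real.exp (gE t) * (1 / N)) := by
          apply mul_le_mul_of_nonneg_left (mul_le_mul_of_nonneg_left h3 (Real.exp_pos _).le) hC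
      _ = C * Real.exp (gE t) / N := by ring
  -- combine
  have hnn : (0:ℝ) ≤ ∫ s in t₀..t, C * Real.exp (gE s) :=
    intervalIntegral.integral_nonneg htt₀.le (fun u _ => by positivity)
  have habs : |∫ s in t₀..t, Φ s| ≤ C * Real.exp (gE t) / N := by
    calc |∫ s in t₀..t, Φ s| ≤ |∫ s in t₀..t, C * Real.exp (gE s)| := htail1
      _ = ∫ s in t₀..t, C * Real.exp (gE s) := abs_of_nonneg hnn
      _ ≤ ∫ s in t₀..t, C * (Real.exp (gE t) * Real.exp (N * (s - t))) := htail2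
      _ ≤ C * Real.exp (gE t) / N := htail3
  have hexpne : Real.exp (gE t) ≠ 0 := (Real.exp_pos _).ne'
  have hfinal : |Real.exp (-gE t) * ∫ s in (0:ℝ)..t, Φ s| ≤
      Real.exp (-gE t) * CA + C / N := by
    rw [hsplit, mul_add]
    refine le_trans (abs_add_le _ _) ?_
    have e1 : |Real.exp (-gE t) * ∫ s in (0:ℝ)..t₀, Φ s| = Real.exp (-gE t) * CA := by
      rw [abs_mul, abs_of_pos (Real.exp_pos _)]
    have e2 : |Real.exp (-gE t) * ∫ s in t₀..t, Φ s| ≤ C / N := by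
      rw [abs_mul, abs_of_pos (Real.exp_pos _)]
      calc Real.exp (-gE t) * |∫ s in t₀..t, Φ s|
          ≤ Real.exp (-gE t) * (C * Real.exp (gE t) / N) :=
            mul_le_mul_of_nonneg_left habs (Real.exp_pos _).le
        _ = C / N := by rw [Real.exp_neg]; field_simp
    exact add_le_add (le_of_eq e1) e2
  calc |Real.exp (-gE t) * ∫ s in (0:ℝ)..t, Φ s| ≤ Real.exp (-gE t) * CA + C / N := hfinal
    _ < ε / 2 + ε / 2 := by exact add_lt_add_of_lt_of_le hta (le_of_lt hCN)
    _ = ε := by ring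

/-- If `τ_μ(x) = T`, then the explicitly given portfolio process `X`
satisfies `lim_{t↗T} X_t = 0`. -/
theorem stmt_6 (T : ℝ) (hT : 0 < T) (C : Coeffs T)
    (δ : ℝ) (hδ : δ ∈ Set.Icc (0:ℝ) 1)
    (A : ℝ → ℝ) (hA : IsRiccatiSol T δ C A)
    (μ : ℝ → ℝ) (hμ : MeasureTheory.IntegrableOn μ (Set.Icc 0 T))
    (x : ℝ) (X : ℝ → ℝ)
    (hX : ∀ t : ℝ, X t = if t ≤ tauMu T δ C A μ x then
        x * Real.exp (-∫ r in (0:ℝ)..t, (A r - δ * C.kap r) / C.eta r)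
          - ∫ s in (0:ℝ)..t, (1 / C.eta s)
              * Real.exp (-∫ r in s..t, (A r - δ * C.kap r) / C.eta r)
              * ∫ u in s..(tauMu T δ C A μ x),
                  C.kap u * μ u * Real.exp (-∫ r in s..u, A r / C.eta r)
      else 0)
    (hτ : tauMu T δ C A μ x = T) :
    Filter.Tendsto X (nhdsWithin T (Set.Iio T)) (nhds 0) := by
  obtain ⟨hAc, hAeq, hAtop⟩ := hA
  obtain ⟨hδ0, hδ1⟩ := hδ
  -- continuity of coefficients
  have hκc : ContinuousOn C.kap (Icc 0 T) := fun r hr => (C.kap_hasDeriv r hr).continuousWithinAt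
  have hηc : ContinuousOn C.eta (Icc 0 T) := fun r hr => (C.eta_hasDeriv r hr).continuousWithinAt
  have hNe : Set.Nonempty (Icc (0:ℝ) T) := nonempty_Icc.mpr hT.le
  obtain ⟨x₁, hx₁, hmin⟩ := isCompact_Icc.exists_isMinOn hNe hηc
  obtain ⟨x₂, hx₂, hmax⟩ := isCompact_Icc.exists_isMaxOn hNe hηc
  obtain ⟨x₃, hx₃, hκmax⟩ := isCompact_Icc.exists_isMaxOn hNe hκc
  set ηm : ℝ := C.eta x₁ with hηmdef
  set ηM : ℝ := C.eta x₂ with hηMdef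
  set K : ℝ := C.kap x₃ with hKdef
  have hηm : 0 < ηm := C.eta_pos x₁ hx₁
  have hηmle : ∀ r ∈ Icc (0:ℝ) T, ηm ≤ C.eta r := fun r hr => hmin hr
  have hηMge : ∀ r ∈ Icc (0:ℝ) T, C.eta r ≤ ηM := fun r hr => hmax hr
  have hηM : 0 < ηM := lt_of_lt_of_le hηm (hηmle x₂ hx₂)
  have hKle : ∀ r ∈ Icc (0:ℝ) T, C.kap r ≤ K := fun r hr => hκmax hr
  have hK0 : 0 ≤ K := C.kap_nonneg x₃ hx₃
  have hηpos : ∀ r ∈ Icc (0:ℝ) T, 0 < C.eta r := C.eta_pos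
  have hηne0 : ∀ r ∈ Icc (0:ℝ) T, C.eta r ≠ 0 := fun r hr => (hηpos r hr).ne'
  have hIcoIcc : Ico (0:ℝ) T ⊆ Icc 0 T := Ico_subset_Icc_self
  -- continuity of the two integrands
  have hPc : ContinuousOn (fun r => A r / C.eta r) (Ico 0 T) :=
    hAc.div (hηc.mono hIcoIcc) (fun r hr => hηne0 r (hIcoIcc hr))
  have hEc : ContinuousOn (fun r => (A r - δ * C.kap r) / C.eta r) (Ico 0 T) :=
    (hAc.sub (continuousOn_const.mul (hκc.mono hIcoIcc))).div (hηc.mono hIcoIcc)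
      (fun r hr => hηne0 r (hIcoIcc hr))
  have hIccIco : ∀ a b : ℝ, 0 ≤ a → 0 ≤ b → a < T → b < T → uIcc a b ⊆ Ico 0 T := by
    intro a b h1 h2 h3 h4 r hr
    rcases le_total a b with h | h
    · rw [uIcc_of_le h] at hr; exact ⟨le_trans h1 hr.1, lt_of_le_of_lt hr.2 h4⟩
    · rw [uIcc_of_ge h] at hr; exact ⟨le_trans h2 hr.1, lt_of_le_of_lt hr.2 h3⟩
  have hPint : ∀ a b : ℝ, 0 ≤ a → 0 ≤ b → a < T → b < T →
      IntervalIntegrable (fun r => A r / C.eta r) volume a b :=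
    fun a b h1 h2 h3 h4 => (hPc.mono (hIccIco a b h1 h2 h3 h4)).intervalIntegrable
  have hEint : ∀ a b : ℝ, 0 ≤ a → 0 ≤ b → a < T → b < T →
      IntervalIntegrable (fun r => (A r - δ * C.kap r) / C.eta r) volume a b :=
    fun a b h1 h2 h3 h4 => (hEc.mono (hIccIco a b h1 h2 h3 h4)).intervalIntegrable
  set G : ℝ → ℝ := fun t => ∫ r in (0:ℝ)..t, A r / C.eta r with hGdef
  set gE : ℝ → ℝ := fun t => ∫ r in (0:ℝ)..t, (A r - δ * C.kap r) / C.eta r with hgEdef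
  have hGc : ContinuousOn G (Ico 0 T) :=
    continuousOn_primitive_Ico (fun b h1 h2 => hPint 0 b le_rfl h1 hT h2)
  have hgEc : ContinuousOn gE (Ico 0 T) :=
    continuousOn_primitive_Ico (fun b h1 h2 => hEint 0 b le_rfl h1 hT h2)
  -- a point after which A ≥ 1
  obtain ⟨s₀, hs₀0, hs₀T, hs₀A⟩ := exists_lower_seg hT hAtop 1
  -- lambda is interval integrable
  obtain ⟨L, hL⟩ := C.lam_bdd
  have hlamint : ∀ a b : ℝ, 0 ≤ a → 0 ≤ b → a ≤ T → b ≤ T →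
      IntervalIntegrable C.lam volume a b := by
    intro a b h1 h2 h3 h4
    rw [intervalIntegrable_iff]
    apply Measure.integrableOn_of_bounded (M := L)
    · exact (measure_Ioc_lt_top).ne
    · exact C.lam_meas.aestronglyMeasurable
    · refine (ae_restrict_iff' measurableSet_uIoc).mpr (ae_of_all _ ?_)
      intro r hr
      have hr1 : min a b < r := hr.1
      have hr2 : r ≤ max a b := hr.2
      have : r ∈ Icc (0:ℝ) T := ⟨le_trans (le_min h1 h2) hr1.le, le_trans hr2 (max_le h3 h4)⟩
      simpa [Real.norm_eq_abs] using hL r this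
  -- Riccati comparison : lower bound on A
  have hAlow : ∀ s, s₀ ≤ s → s < T → ηm / (T - s) ≤ A s := by
    have hmain := blowup_lower (c := ηm⁻¹) (inv_pos.mpr hηm) hs₀T
      (hAc.mono (fun r hr => ⟨le_trans hs₀0 hr.1, hr.2⟩)) hs₀A ?_ hAtop
    · intro s h1 h2
      have h3 := hmain s h1 h2
      have hTs : 0 < T - s := by linarith
      have hA0 : 0 < A s := lt_of_lt_of_le zero_lt_one (hs₀A s h1 h2)
      rw [div_le_iff₀ hTs]
      calc ηm = ηm * 1 := (mul_one _).symm
        _ ≤ ηm * (ηm⁻¹ * A s * (T - s)) := by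
            apply mul_le_mul_of_nonneg_left h3 hηm.le
        _ = A s * (T - s) := by field_simp
    · -- the integral inequality
      intro s h1 h2 t h3 h4 h5
      have hmem_s : s ∈ Ico (0:ℝ) T := ⟨le_trans hs₀0 h1, h2⟩
      have hmem_t : t ∈ Ico (0:ℝ) T := ⟨le_trans hs₀0 h3, h4⟩
      have heq := hAeq s hmem_s t hmem_t
      have hsubIcc : Icc s t ⊆ Icc (0:ℝ) T :=
        fun r hr => ⟨le_trans hmem_s.1 hr.1, le_trans hr.2 h4.le⟩
      have hABc : ContinuousOn
          (fun r => A r ^ 2 / C.eta r - δ * (C.kap r / C.eta r) * A r) (Ico 0 T) :=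
        ((hAc.pow 2).div (hηc.mono hIcoIcc) (fun r hr => hηne0 r (hIcoIcc hr))).sub
          (((continuousOn_const.mul ((hκc.mono hIcoIcc).div (hηc.mono hIcoIcc)
            (fun r hr => hηne0 r (hIcoIcc hr))))).mul hAc)
      have hFint : IntervalIntegrable
          (fun r => A r ^ 2 / C.eta r - δ * (C.kap r / C.eta r) * A r - C.lam r) volume s t := by
        have h6 : IntervalIntegrable
            (fun r => A r ^ 2 / C.eta r - δ * (C.kap r / C.eta r) * A r) volume s t :=
          (hABc.mono (hIccIco s t hmem_s.1 hmem_t.1 h2 h4)).intervalIntegrable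
        exact h6.sub (hlamint s t hmem_s.1 hmem_t.1 h2.le h4.le)
      have hA2int : IntervalIntegrable (fun r => ηm⁻¹ * A r ^ 2) volume s t :=
        (continuousOn_const.mul ((hAc.pow 2).mono
          (hIccIco s t hmem_s.1 hmem_t.1 h2 h4))).intervalIntegrable
      have hmono : (∫ r in s..t,
          (A r ^ 2 / C.eta r - δ * (C.kap r / C.eta r) * A r - C.lam r)) ≤
          ∫ r in s..t, ηm⁻¹ * A r ^ 2 := by
        apply intervalIntegral.integral_mono_on h5 hFint hA2int
        intro r hr
        have hrIcc : r ∈ Icc (0:ℝ) T := hsubIcc hr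
        have hrT : r < T := lt_of_le_of_lt hr.2 h4
        have h1A : 1 ≤ A r := hs₀A r (le_trans h1 hr.1) hrT
        have hηr : 0 < C.eta r := hηpos r hrIcc
        have e1 : A r ^ 2 / C.eta r ≤ ηm⁻¹ * A r ^ 2 := by
          rw [inv_mul_eq_div]
          exact div_le_div_of_nonneg_left (sq_nonneg _) hηm (hηmle r hrIcc)
        have e2 : 0 ≤ δ * (C.kap r / C.eta r) * A r :=
          mul_nonneg (mul_nonneg hδ0 (div_nonneg (C.kap_nonneg r hrIcc) hηr.le))
            (by linarith)
        have e3 : 0 ≤ C.lam r := C.lam_nonneg r hrIcc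
        linarith
      rw [heq]
      have hpull : (∫ r in s..t, ηm⁻¹ * A r ^ 2) = ηm⁻¹ * ∫ r in s..t, A r ^ 2 :=
        intervalIntegral.integral_const_mul _ _
      linarith
  -- B₀ and lower bounds on integrals of A/η
  set B₀ : ℝ := ∫ r in (0:ℝ)..s₀, |A r / C.eta r| with hB₀def
  have hPabsint : ∀ a b : ℝ, 0 ≤ a → 0 ≤ b → a < T → b < T →
      IntervalIntegrable (fun r => |A r / C.eta r|) volume a b :=
    fun a b h1 h2 h3 h4 => ((hPc.mono (hIccIco a b h1 h2 h3 h4)).abs).intervalIntegrable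
  have hB₀0 : 0 ≤ B₀ :=
    intervalIntegral.integral_nonneg hs₀0 (fun u _ => abs_nonneg _)
  have hPnn : ∀ r, s₀ ≤ r → r < T → 0 ≤ A r / C.eta r := fun r h1 h2 =>
    div_nonneg (le_trans zero_le_one (hs₀A r h1 h2)) (hηpos r ⟨le_trans hs₀0 h1, h2.le⟩).le
  have hGlow1 : ∀ s u : ℝ, 0 ≤ s → s ≤ u → u ≤ s₀ → -B₀ ≤ ∫ r in s..u, A r / C.eta r := by
    intro s u h0 hsu hus₀
    have huT : u < T := lt_of_le_of_lt hus₀ hs₀T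
    have hsT : s < T := lt_of_le_of_lt hsu huT
    have h1 : |∫ r in s..u, A r / C.eta r| ≤ ∫ r in s..u, |A r / C.eta r| := by
      have := intervalIntegral.norm_integral_le_integral_norm
        (f := fun r => A r / C.eta r) (μ := volume) (a := s) (b := u) hsu
      simpa only [Real.norm_eq_abs] using this
    have h2 : (∫ r in s..u, |A r / C.eta r|) ≤ B₀ := by
      apply intervalIntegral.integral_mono_interval h0 hsu hus₀
        (ae_of_all _ (fun r => abs_nonneg _)) (hPabsint 0 s₀ le_rfl hs₀0 hT hs₀T)
    have h3 := neg_abs_le (∫ r in s..u, A r / C.eta r)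
    linarith
  have hGlow : ∀ s u : ℝ, 0 ≤ s → s ≤ u → u < T → -B₀ ≤ ∫ r in s..u, A r / C.eta r := by
    intro s u h0 hsu huT
    have hsT : s < T := lt_of_le_of_lt hsu huT
    rcases le_or_gt s₀ s with hc1 | hc1
    · refine le_trans (by linarith) (intervalIntegral.integral_nonneg hsu ?_)
      intro r hr
      exact hPnn r (le_trans hc1 hr.1) (lt_of_le_of_lt hr.2 huT)
    · rcases le_or_gt u s₀ with hc2 | hc2
      · exact hGlow1 s u h0 hsu hc2
      · have hsplit : (∫ r in s..u, A r / C.eta r) =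
            (∫ r in s..s₀, A r / C.eta r) + ∫ r in s₀..u, A r / C.eta r :=
          (intervalIntegral.integral_add_adjacent_intervals
            (hPint s s₀ h0 hs₀0 hsT hs₀T) (hPint s₀ u hs₀0 (le_trans h0 hsu) hs₀T huT)).symm
        have hpart1 : -B₀ ≤ ∫ r in s..s₀, A r / C.eta r := hGlow1 s s₀ h0 hc1.le le_rfl
        have hpart2 : 0 ≤ ∫ r in s₀..u, A r / C.eta r :=
          intervalIntegral.integral_nonneg hc2.le
            (fun r hr => hPnn r hr.1 (lt_of_le_of_lt hr.2 huT))
        linarith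
  have hGlow0 : ∀ u, 0 ≤ u → u < T → -B₀ ≤ G u := by
    intro u h1 h2
    exact hGlow 0 u le_rfl h1 h2
  -- G tends to infinity
  have hGtop : Tendsto G (𝓝[<] T) atTop := by
    have hlog : ∀ t, s₀ ≤ t → t < T →
        (ηm / ηM) * (Real.log (T - s₀) - Real.log (T - t)) ≤
          ∫ r in s₀..t, A r / C.eta r := by
      intro t h1 h2
      have hTt : 0 < T - t := by linarith
      have hinvc : ContinuousOn (fun r => (ηm / ηM) * (T - r)⁻¹) (Icc s₀ t) := by
        apply continuousOn_const.mul
        apply ContinuousOn.inv₀ ((continuous_const.sub continuous_id).continuousOn)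
        intro r hr
        have : r ≤ t := hr.2
        have : 0 < T - r := by linarith
        exact this.ne'
      have hftc : (∫ r in s₀..t, (ηm / ηM) * (T - r)⁻¹) =
          (ηm / ηM) * (Real.log (T - s₀) - Real.log (T - t)) := by
        rw [intervalIntegral.integral_const_mul]
        congr 1
        have hsub : (∫ r in s₀..t, (T - r)⁻¹) =
            (-Real.log (T - t)) - (-Real.log (T - s₀)) := by
          apply intervalIntegral.integral_eq_sub_of_hasDerivAt
            (f := fun r => -Real.log (T - r))
          · intro r hr
            rw [uIcc_of_le h1] at hr
            have hTr : 0 < T - r := by have := hr.2; linarith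
            have hd : HasDerivAt (fun r : ℝ => T - r) (-1) r := by
              simpa using (hasDerivAt_id r).const_sub T
            have hlog := (Real.hasDerivAt_log hTr.ne').comp r hd
            have := hlog.neg
            exact this.congr_deriv (by ring)
          · apply ContinuousOn.intervalIntegrable
            rw [uIcc_of_le h1]
            apply ContinuousOn.inv₀ ((continuous_const.sub continuous_id).continuousOn)
            intro r hr
            have : r ≤ t := hr.2
            have h5 : 0 < T - r := by linarith
            exact h5.ne'
        rw [hsub]; ring
      rw [← hftc]
      apply intervalIntegral.integral_mono_on h1
        (ContinuousOn.intervalIntegrable (by rw [uIcc_of_le h1]; exact hinvc))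
        (hPint s₀ t hs₀0 (le_trans hs₀0 h1) hs₀T h2)
      intro r hr
      have hrT : r < T := lt_of_le_of_lt hr.2 h2
      have hrIcc : r ∈ Icc (0:ℝ) T := ⟨le_trans hs₀0 hr.1, hrT.le⟩
      have hTr : 0 < T - r := by linarith
      have hAr : ηm / (T - r) ≤ A r := hAlow r hr.1 hrT
      have hA0 : 0 ≤ A r := le_trans (by positivity) hAr
      have hηr : 0 < C.eta r := hηpos r hrIcc
      have heqq : (ηm / ηM) * (T - r)⁻¹ = ηm / (T - r) / ηM := by
        rw [div_div, mul_comm (T - r) ηM, ← div_div]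
        exact (div_eq_mul_inv _ _).symm
      calc (ηm / ηM) * (T - r)⁻¹ = ηm / (T - r) / ηM := heqq
          _ ≤ A r / C.eta r := div_le_div₀ hA0 hAr hηr (hηMge r hrIcc)
    -- limit of the log lower bound
    have hTlim : Tendsto (fun t => T - t) (𝓝[<] T) (𝓝[>] 0) := by
      apply tendsto_nhdsWithin_of_tendsto_nhds_of_eventually_within
      · have h1 : Tendsto (fun t : ℝ => T - t) (𝓝 T) (𝓝 (T - T)) :=
          (continuous_const.sub continuous_id).tendsto T
        rw [sub_self] at h1
        exact h1.mono_left nhdsWithin_le_nhds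
      · exact eventually_of_mem self_mem_nhdsWithin
          (fun t ht => by simp only [mem_Iio] at ht; simp [mem_Ioi]; linarith)
    have hloglim : Tendsto (fun t => Real.log (T - t)) (𝓝[<] T) atBot :=
      Real.tendsto_log_nhdsGT_zero.comp hTlim
    have hneg : Tendsto (fun t => -Real.log (T - t)) (𝓝[<] T) atTop :=
      tendsto_neg_atBot_atTop.comp hloglim
    have hlim2 : Tendsto (fun t =>
        (∫ r in (0:ℝ)..s₀, A r / C.eta r) +
          (ηm / ηM) * (Real.log (T - s₀) - Real.log (T - t))) (𝓝[<] T) atTop := by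
      apply tendsto_atTop_add_const_left
      have h6 : Tendsto (fun t => Real.log (T - s₀) + -Real.log (T - t)) (𝓝[<] T) atTop :=
        tendsto_atTop_add_const_left _ _ hneg
      have h7 := h6.const_mul_atTop (by positivity : (0:ℝ) < ηm / ηM)
      refine h7.congr (fun t => ?_)
      ring
    apply tendsto_atTop_mono' _ ?_ hlim2
    filter_upwards [eventually_of_mem (Ioo_mem_nhdsLT hs₀T) (fun r hr => hr)]
      with t ht
    have hsplit : G t = (∫ r in (0:ℝ)..s₀, A r / C.eta r) +
        ∫ r in s₀..t, A r / C.eta r :=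
      (intervalIntegral.integral_add_adjacent_intervals
        (hPint 0 s₀ le_rfl hs₀0 hT hs₀T)
        (hPint s₀ t hs₀0 (le_trans hs₀0 ht.1.le) hs₀T ht.2)).symm
    rw [hsplit]
    have := hlog t ht.1.le ht.2
    linarith
  -- gE tends to infinity
  have hκηint : ∀ t, 0 ≤ t → t < T →
      IntervalIntegrable (fun r => C.kap r / C.eta r) volume 0 t :=
    fun t h1 h2 => (((hκc.mono hIcoIcc).div (hηc.mono hIcoIcc)
      (fun r hr => hηne0 r (hIcoIcc hr))).mono (hIccIco 0 t le_rfl h1 hT h2)).intervalIntegrable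
  have hgEG : ∀ t, 0 ≤ t → t < T →
      gE t = G t - δ * ∫ r in (0:ℝ)..t, C.kap r / C.eta r := by
    intro t h1 h2
    have hcongr : ∀ r ∈ uIcc (0:ℝ) t, (A r - δ * C.kap r) / C.eta r =
        A r / C.eta r - δ * (C.kap r / C.eta r) := by
      intro r hr
      rw [uIcc_of_le h1] at hr
      have := hηne0 r ⟨hr.1, le_trans hr.2 h2.le⟩
      field_simp
    calc gE t = ∫ r in (0:ℝ)..t, (A r / C.eta r - δ * (C.kap r / C.eta r)) :=
          intervalIntegral.integral_congr hcongr
      _ = (∫ r in (0:ℝ)..t, A r / C.eta r) -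
            ∫ r in (0:ℝ)..t, δ * (C.kap r / C.eta r) :=
          intervalIntegral.integral_sub (hPint 0 t le_rfl h1 hT h2)
            ((hκηint t h1 h2).const_mul δ)
      _ = G t - δ * ∫ r in (0:ℝ)..t, C.kap r / C.eta r := by
          rw [intervalIntegral.integral_const_mul]
  have hκηbd : ∀ t, 0 ≤ t → t < T →
      |∫ r in (0:ℝ)..t, C.kap r / C.eta r| ≤ K / ηm * T := by
    intro t h1 h2
    have hb := intervalIntegral.norm_integral_le_of_norm_le_const (C := K / ηm)
      (a := 0) (b := t) (f := fun r => C.kap r / C.eta r) ?_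
    · rw [Real.norm_eq_abs] at hb
      refine le_trans hb ?_
      have : |t - 0| = t := by rw [sub_zero, abs_of_nonneg h1]
      rw [this]
      exact mul_le_mul_of_nonneg_left h2.le (div_nonneg hK0 hηm.le)
    · intro r hr
      rw [uIoc_of_le h1] at hr
      have hrIcc : r ∈ Icc (0:ℝ) T := ⟨hr.1.le, le_trans hr.2 h2.le⟩
      have hηr := hηpos r hrIcc
      rw [Real.norm_eq_abs, abs_of_nonneg (div_nonneg (C.kap_nonneg r hrIcc) hηr.le)]
      exact div_le_div₀ hK0 (hKle r hrIcc) hηm (hηmle r hrIcc)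
  have hgEtop : Tendsto gE (𝓝[<] T) atTop := by
    apply tendsto_atTop_mono' _ ?_ (tendsto_atTop_add_const_right _ (-(K / ηm * T)) hGtop)
    filter_upwards [eventually_of_mem (Ioo_mem_nhdsLT hT) (fun r hr => hr)]
      with t ht
    rw [hgEG t ht.1.le ht.2]
    have h1 := hκηbd t ht.1.le ht.2
    have h2 : δ * ∫ r in (0:ℝ)..t, C.kap r / C.eta r ≤ K / ηm * T := by
      calc δ * ∫ r in (0:ℝ)..t, C.kap r / C.eta r ≤
            |δ * ∫ r in (0:ℝ)..t, C.kap r / C.eta r| := le_abs_self _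
        _ = δ * |∫ r in (0:ℝ)..t, C.kap r / C.eta r| := by
            rw [abs_mul, abs_of_nonneg hδ0]
        _ ≤ 1 * (K / ηm * T) := by
            apply mul_le_mul hδ1 h1 (abs_nonneg _) zero_le_one
        _ = K / ηm * T := one_mul _
    linarith
  -- slope condition
  have hslope : ∀ N : ℝ, ∃ t₀, 0 ≤ t₀ ∧ t₀ < T ∧
      ∀ s t, t₀ ≤ s → s ≤ t → t < T → N * (t - s) ≤ gE t - gE s := by
    intro N
    obtain ⟨t₀, h0, h1, h2⟩ := exists_lower_seg hT hAtop (|N| * ηM + K)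
    refine ⟨t₀, h0, h1, ?_⟩
    intro s t hs hst htT
    have hsT : s < T := lt_of_le_of_lt hst htT
    have h0s : 0 ≤ s := le_trans h0 hs
    have h0t : 0 ≤ t := le_trans h0s hst
    have hdiff : gE t - gE s = ∫ r in s..t, (A r - δ * C.kap r) / C.eta r :=
      intervalIntegral.integral_interval_sub_left
        (hEint 0 t le_rfl h0t hT htT) (hEint 0 s le_rfl h0s hT hsT)
    rw [hdiff]
    have hmono : (∫ r in s..t, (N:ℝ)) ≤ ∫ r in s..t, (A r - δ * C.kap r) / C.eta r := by
      apply intervalIntegral.integral_mono_on hst intervalIntegrable_const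
        (hEint s t h0s h0t hsT htT)
      intro r hr
      have hrT : r < T := lt_of_le_of_lt hr.2 htT
      have hrA := h2 r (le_trans hs hr.1) hrT
      have hrIcc : r ∈ Icc (0:ℝ) T := ⟨le_trans h0s hr.1, hrT.le⟩
      have hηr := hηpos r hrIcc
      rw [le_div_iff₀ hηr]
      have c1 : δ * C.kap r ≤ K :=
        calc δ * C.kap r ≤ 1 * C.kap r :=
              mul_le_mul_of_nonneg_right hδ1 (C.kap_nonneg r hrIcc)
          _ = C.kap r := one_mul _
          _ ≤ K := hKle r hrIcc
      have c2 : N * C.eta r ≤ |N| * ηM := by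
        calc N * C.eta r ≤ |N| * C.eta r :=
              mul_le_mul_of_nonneg_right (le_abs_self N) hηr.le
          _ ≤ |N| * ηM := mul_le_mul_of_nonneg_left (hηMge r hrIcc) (abs_nonneg N)
      linarith
    have hconst : (∫ r in s..t, (N:ℝ)) = N * (t - s) := by
      rw [intervalIntegral.integral_const, smul_eq_mul]; ring
    linarith
  -- the function w and its primitive
  have hκμint : IntegrableOn (fun u => C.kap u * μ u) (Icc 0 T) := by
    apply Integrable.mono' (hμ.norm.const_mul K)
    · exact (hκc.aestronglyMeasurable measurableSet_Icc).mul hμ.aestronglyMeasurable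
    · refine (ae_restrict_iff' measurableSet_Icc).mpr (ae_of_all _ ?_)
      intro u hu
      rw [Real.norm_eq_abs, abs_mul]
      have : |C.kap u| = C.kap u := abs_of_nonneg (C.kap_nonneg u hu)
      rw [this, Real.norm_eq_abs]
      exact mul_le_mul_of_nonneg_right (hKle u hu) (abs_nonneg _)
  have hrestr : volume.restrict (Icc (0:ℝ) T) = volume.restrict (Ico (0:ℝ) T) :=
    (Measure.restrict_congr_set Ico_ae_eq_Icc).symm
  have hwmeas : AEStronglyMeasurable (fun u => C.kap u * μ u * Real.exp (-G u))
      (volume.restrict (Icc 0 T)) := by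
    rw [hrestr]
    exact (((hκc.mono hIcoIcc).aestronglyMeasurable measurableSet_Ico).mul
      (hμ.mono_set hIcoIcc).aestronglyMeasurable).mul
      ((Real.continuous_exp.comp_continuousOn hGc.neg).aestronglyMeasurable measurableSet_Ico)
  have hwint : IntegrableOn (fun u => C.kap u * μ u * Real.exp (-G u)) (Icc 0 T) := by
    apply Integrable.mono' (hμ.norm.const_mul (K * Real.exp B₀)) hwmeas
    rw [hrestr]
    refine (ae_restrict_iff' measurableSet_Ico).mpr (ae_of_all _ ?_)
    intro u hu
    have h1 : -G u ≤ B₀ := by linarith [hGlow0 u hu.1 hu.2]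
    have h2 : Real.exp (-G u) ≤ Real.exp B₀ := Real.exp_le_exp.mpr h1
    have hκu : |C.kap u| = C.kap u := abs_of_nonneg (C.kap_nonneg u (hIcoIcc hu))
    rw [Real.norm_eq_abs, abs_mul, abs_mul, abs_of_pos (Real.exp_pos _), hκu,
      Real.norm_eq_abs]
    calc C.kap u * |μ u| * Real.exp (-G u) ≤ K * |μ u| * Real.exp B₀ := by
          apply mul_le_mul (mul_le_mul_of_nonneg_right (hKle u (hIcoIcc hu)) (abs_nonneg _))
            h2 (Real.exp_pos _).le
          positivity
      _ = K * Real.exp B₀ * |μ u| := by ring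
  have hwiv : ∀ a b : ℝ, 0 ≤ a → a ≤ b → b ≤ T →
      IntervalIntegrable (fun u => C.kap u * μ u * Real.exp (-G u)) volume a b := by
    intro a b h1 h2 h3
    rw [intervalIntegrable_iff_integrableOn_Icc_of_le h2]
    exact hwint.mono_set (Icc_subset_Icc h1 h3)
  set W : ℝ → ℝ := fun s =>
    (∫ u in (0:ℝ)..T, C.kap u * μ u * Real.exp (-G u)) -
      ∫ u in (0:ℝ)..s, C.kap u * μ u * Real.exp (-G u) with hWdef
  have hWc : ContinuousOn W (Icc 0 T) := by
    apply continuousOn_const.sub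
    have h1 := intervalIntegral.continuousOn_primitive_interval
      (a := 0) (b := T) (μ := volume)
      (f := fun u => C.kap u * μ u * Real.exp (-G u)) (by rwa [uIcc_of_le hT.le])
    rwa [uIcc_of_le hT.le] at h1
  have hWeq : ∀ s, 0 ≤ s → s ≤ T →
      W s = ∫ u in s..T, C.kap u * μ u * Real.exp (-G u) := by
    intro s h1 h2
    exact intervalIntegral.integral_interval_sub_left
      (hwiv 0 T le_rfl hT.le le_rfl) (hwiv 0 s le_rfl h1 h2)
  -- a.e. u ≠ T
  have hTnull : ∀ᵐ u : ℝ, u ≠ T := by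
    refine eventually_of_mem (?_ : {T}ᶜ ∈ ae volume) (fun x hx => hx)
    rw [mem_ae_iff, compl_compl]
    exact measure_singleton T
  -- rewrite the inner integral
  have hIeq : ∀ s, 0 ≤ s → s < T →
      (∫ u in s..T, C.kap u * μ u * Real.exp (-∫ r in s..u, A r / C.eta r)) =
        Real.exp (G s) * W s := by
    intro s h1 h2
    rw [hWeq s h1 h2.le, ← intervalIntegral.integral_const_mul]
    apply intervalIntegral.integral_congr_ae
    filter_upwards [hTnull] with u hu humem
    rw [uIoc_of_le h2.le] at humem
    have huT : u < T := lt_of_le_of_ne humem.2 hu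
    have hus : s < u := humem.1
    have hsu : (∫ r in s..u, A r / C.eta r) = G u - G s :=
      (intervalIntegral.integral_interval_sub_left
        (hPint 0 u le_rfl (le_trans h1 hus.le) hT huT)
        (hPint 0 s le_rfl h1 hT h2)).symm
    rw [hsu, neg_sub, Real.exp_sub, Real.exp_neg]
    field_simp
  -- uniform bound on the inner integral
  set CI : ℝ := Real.exp B₀ * ∫ u in (0:ℝ)..T, |C.kap u * μ u| with hCIdef
  have hκμiv : ∀ a b : ℝ, 0 ≤ a → a ≤ b → b ≤ T →
      IntervalIntegrable (fun u => |C.kap u * μ u|) volume a b := by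
    intro a b h1 h2 h3
    rw [intervalIntegrable_iff_integrableOn_Icc_of_le h2]
    exact (hκμint.mono_set (Icc_subset_Icc h1 h3)).abs
  have hCI : ∀ s, 0 ≤ s → s < T → |Real.exp (G s) * W s| ≤ CI := by
    intro s h1 h2
    rw [hWeq s h1 h2.le, ← intervalIntegral.integral_const_mul]
    have hb : ‖∫ u in s..T, Real.exp (G s) * (C.kap u * μ u * Real.exp (-G u))‖ ≤
        abs (∫ u in s..T, Real.exp B₀ * |C.kap u * μ u|) := by
      apply intervalIntegral.norm_integral_le_abs_of_norm_le
      · filter_upwards [ae_restrict_mem measurableSet_uIoc,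
          ae_restrict_of_ae hTnull] with u humem hu
        rw [uIoc_of_le h2.le] at humem
        have huT : u < T := lt_of_le_of_ne humem.2 hu
        have hus : s < u := humem.1
        have hGsu : -B₀ ≤ ∫ r in s..u, A r / C.eta r := hGlow s u h1 hus.le huT
        have hsu : (∫ r in s..u, A r / C.eta r) = G u - G s :=
          (intervalIntegral.integral_interval_sub_left
            (hPint 0 u le_rfl (le_trans h1 hus.le) hT huT)
            (hPint 0 s le_rfl h1 hT h2)).symm
        rw [hsu] at hGsu
        have hexp : Real.exp (G s - G u) ≤ Real.exp B₀ := by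
          apply Real.exp_le_exp.mpr; linarith
        rw [Real.norm_eq_abs]
        calc |Real.exp (G s) * (C.kap u * μ u * Real.exp (-G u))| =
              |C.kap u * μ u| * Real.exp (G s - G u) := by
                rw [Real.exp_sub, Real.exp_neg, abs_mul, abs_mul,
                  abs_of_pos (Real.exp_pos _), abs_of_pos (inv_pos.mpr (Real.exp_pos _))]
                ring
          _ ≤ |C.kap u * μ u| * Real.exp B₀ :=
              mul_le_mul_of_nonneg_left hexp (abs_nonneg _)
          _ = Real.exp B₀ * |C.kap u * μ u| := by ring
      · exact (hκμiv s T h1 h2.le le_rfl).const_mul _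
    rw [Real.norm_eq_abs] at hb
    refine le_trans hb ?_
    have hnn : (0:ℝ) ≤ ∫ u in s..T, Real.exp B₀ * |C.kap u * μ u| :=
      intervalIntegral.integral_nonneg h2.le (fun u _ => by positivity)
    rw [abs_of_nonneg hnn, intervalIntegral.integral_const_mul, hCIdef]
    apply mul_le_mul_of_nonneg_left ?_ (Real.exp_pos _).le
    exact intervalIntegral.integral_mono_interval h1 h2.le le_rfl
      (ae_of_all _ (fun r => abs_nonneg _)) (hκμiv 0 T le_rfl hT.le le_rfl)
  -- the function Φ and conclusion
  set Φ : ℝ → ℝ := fun s => 1 / C.eta s * Real.exp (gE s) * (Real.exp (G s) * W s) with hΦdef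
  have hΦc : ContinuousOn Φ (Ico 0 T) := by
    refine ContinuousOn.mul (ContinuousOn.mul ?_ ?_) ?_
    · exact continuousOn_const.div (hηc.mono hIcoIcc) (fun r hr => hηne0 r (hIcoIcc hr))
    · exact Real.continuous_exp.comp_continuousOn hgEc
    · exact (Real.continuous_exp.comp_continuousOn hGc).mul (hWc.mono hIcoIcc)
  have hintCI : (0:ℝ) ≤ ∫ u in (0:ℝ)..T, |C.kap u * μ u| :=
    intervalIntegral.integral_nonneg hT.le (fun u _ => abs_nonneg _)
  have hCI0 : 0 ≤ CI := by
    rw [hCIdef]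
    exact mul_nonneg (Real.exp_pos _).le hintCI
  have hΦbd : ∀ s, 0 ≤ s → s < T → |Φ s| ≤ CI / ηm * Real.exp (gE s) := by
    intro s h1 h2
    have hsIcc : s ∈ Icc (0:ℝ) T := ⟨h1, h2.le⟩
    have hηs := hηpos s hsIcc
    have e1 : 1 / C.eta s ≤ 1 / ηm := one_div_le_one_div_of_le hηm (hηmle s hsIcc)
    have e2 := hCI s h1 h2
    have h1d : (0:ℝ) < 1 / C.eta s := by positivity
    calc |Φ s| = 1 / C.eta s * Real.exp (gE s) * |Real.exp (G s) * W s| := by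
          rw [hΦdef]
          rw [abs_mul, abs_mul, abs_of_pos (Real.exp_pos _), abs_of_pos h1d]
      _ ≤ 1 / ηm * Real.exp (gE s) * CI := by
          apply mul_le_mul (mul_le_mul_of_nonneg_right e1 (Real.exp_pos _).le) e2
            (abs_nonneg _) (by positivity)
      _ = CI / ηm * Real.exp (gE s) := by ring
  have hkey := key_limit hT (div_nonneg hCI0 hηm.le) hgEtop hgEc hΦc hΦbd hslope
  have hexp0 : Tendsto (fun t => Real.exp (-gE t)) (𝓝[<] T) (𝓝 0) :=
    Real.tendsto_exp_atBot.comp (tendsto_neg_atTop_atBot.comp hgEtop)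
  have hfirst : Tendsto (fun t => x * Real.exp (-gE t)) (𝓝[<] T) (𝓝 0) := by
    simpa using hexp0.const_mul x
  have hcomb : Tendsto (fun t => x * Real.exp (-gE t) -
      Real.exp (-gE t) * ∫ s in (0:ℝ)..t, Φ s) (𝓝[<] T) (𝓝 0) := by
    simpa using hfirst.sub hkey
  apply hcomb.congr'
  filter_upwards [eventually_of_mem (Ioo_mem_nhdsLT hT) (fun r hr => hr)] with t ht
  obtain ⟨ht0, htT⟩ := ht
  rw [hX t, hτ, if_pos htT.le]
  have hgEt : (∫ r in (0:ℝ)..t, (A r - δ * C.kap r) / C.eta r) = gE t := rfl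
  rw [hgEt]
  congr 1
  have hcongr2 : EqOn
      (fun s => 1 / C.eta s * Real.exp (-∫ r in s..t, (A r - δ * C.kap r) / C.eta r) *
        ∫ u in s..T, C.kap u * μ u * Real.exp (-∫ r in s..u, A r / C.eta r))
      (fun s => Real.exp (-gE t) * Φ s) (uIcc (0:ℝ) t) := by
    intro s hs
    rw [uIcc_of_le ht0.le] at hs
    have hsT : s < T := lt_of_le_of_lt hs.2 htT
    have hst : (∫ r in s..t, (A r - δ * C.kap r) / C.eta r) = gE t - gE s :=
      (intervalIntegral.integral_interval_sub_left
        (hEint 0 t le_rfl ht0.le hT htT) (hEint 0 s le_rfl hs.1 hT hsT)).symm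
    simp only [hΦdef]
    rw [hst, hIeq s hs.1 hsT]
    simp only [neg_sub, Real.exp_sub, Real.exp_neg]
    ring
  rw [intervalIntegral.integral_congr hcongr2, intervalIntegral.integral_const_mul]

end
end
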